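/- arXiv:2211.06779 — 3 statements merged into one kernel-verified Lean document; each statement's English description precedes it below -/
import Mathlib

section
/- Let λ ∈ ℝ and let g : ℝ → (0,∞) be a Borel function such that log g is locally bounded. Define f : (−∞,0] × ℝ → (0,∞) by f(r,x) = g(x). Then f ∈ 𝔽_λ if and only if the following holds: when λ > 0, limsup_{x→−∞} log g(x)/|x| < λ (the limsup may be −∞) and lim_{x→∞} log g(x)/x exists and equals λ; when λ < 0, lim_{x→−∞} log g(x)/|x| exists and equals |λ| and limsup_{x→∞} log g(x)/x < |λ| (the limsup may be −∞); when λ = 0, limsup_{|x|→∞} log g(x)/|x| ≤ 0 (the limsup may be −∞). -/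
open MeasureTheory Filter

/-- Membership in the class `𝔽_λ` of admissible initial data.
The liminf/limsup conditions (W1)–(W3) and (W'') are expressed in their equivalent
ε-form, which also covers the extended values `±∞`. -/
def MemF (lam : ℝ) (f : ℝ → ℝ → ℝ) : Prop :=
  (∀ r ≤ (0 : ℝ), Measurable (f r)) ∧ (∀ r ≤ (0 : ℝ), ∀ x : ℝ, 0 < f r x) ∧
  (if lam = 0 then
    ∃ δ₀ > (0 : ℝ), ∃ c > (0 : ℝ),
      (∀ δ ∈ Set.Ioc (0 : ℝ) δ₀, ∀ ε > (0 : ℝ), ∃ R < (0 : ℝ), ∀ r ≤ R, ∀ x : ℝ,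
          δ * |r| ≤ |x| → Real.log (f r x) ≤ ε * (|r| + |x|)) ∧
      (∀ ε > (0 : ℝ), ∃ R < (0 : ℝ), ∀ r ≤ R,
          ENNReal.ofReal (Real.exp (-(ε * |r|))) ≤
            ∫⁻ x in Set.Icc (-c) c, ENNReal.ofReal (f r x))
  else
    ∃ δ₀ ∈ Set.Ioo (0 : ℝ) (|lam|),
      (∀ ε > (0 : ℝ), ∃ R < (0 : ℝ), ∀ r ≤ R, ∀ x : ℝ,
          |x / r + lam| ≤ δ₀ → -(ε * |r|) ≤ Real.log (f r x) - lam * x) ∧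
      (∀ δ ∈ Set.Ioc (0 : ℝ) δ₀, ∀ ε > (0 : ℝ), ∃ R < (0 : ℝ), ∀ r ≤ R, ∀ x : ℝ,
          0 ≤ lam * x → δ ≤ |x / r + lam| →
          Real.log (f r x) - lam * x ≤ ε * (|r| + |x|)) ∧
      (∃ μ : ℝ, -1 < μ / lam ∧
        ∀ ε > (0 : ℝ), ∃ R < (0 : ℝ), ∀ r ≤ R, ∀ x : ℝ, lam * x ≤ 0 →
          Real.log (f r x) - μ * x ≤ ε * (|r| + |x|)))

lemma case_zero (g : ℝ → ℝ)
    (hg_meas : Measurable g) (hg_pos : ∀ x, 0 < g x)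
    (hg_locbdd : ∀ K : Set ℝ, IsCompact K → ∃ M : ℝ, ∀ x ∈ K, |Real.log (g x)| ≤ M) :
    MemF 0 (fun _ x => g x) ↔
      ∀ ε > (0 : ℝ), ∃ M > (0 : ℝ), ∀ x : ℝ, M ≤ |x| → Real.log (g x) / |x| ≤ ε := by
  constructor
  · rintro ⟨-, -, h⟩
    rw [if_pos rfl] at h
    obtain ⟨δ₀, hδ₀, c, hc, hA, -⟩ := h
    intro ε hε
    have hε' : 0 < ε * δ₀ / (δ₀ + 1) := by positivity
    obtain ⟨R, hR, hA'⟩ := hA δ₀ ⟨hδ₀, le_rfl⟩ _ hε'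
    refine ⟨max (δ₀ * |R|) 1, by positivity, fun x hx => ?_⟩
    have hx1 : (1:ℝ) ≤ |x| := le_trans (le_max_right _ _) hx
    have hx2 : δ₀ * |R| ≤ |x| := le_trans (le_max_left _ _) hx
    have hL := hA' R le_rfl x hx2
    rw [div_le_iff₀ (by linarith : (0:ℝ) < |x|)]
    have hkey : (ε * δ₀ / (δ₀ + 1)) * (δ₀ + 1) = ε * δ₀ := by field_simp
    nlinarith [abs_nonneg R, abs_nonneg x, mul_pos hε hδ₀]
  · intro hrhs
    refine ⟨fun _ _ => hg_meas, fun _ _ x => hg_pos x, ?_⟩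
    rw [if_pos rfl]
    refine ⟨1, one_pos, 1, one_pos, ?_, ?_⟩
    · intro δ hδ ε hε
      obtain ⟨M, hM, hbd⟩ := hrhs ε hε
      have hδ0 := hδ.1
      refine ⟨-(M / δ + 1), by nlinarith [div_pos hM hδ0], fun r hr x hx => ?_⟩
      have hr0 : r < 0 := lt_of_le_of_lt hr (by nlinarith [div_pos hM hδ0])
      have hrabs : |r| = -r := abs_of_neg hr0
      have hMx : M ≤ |x| := by
        have : M / δ + 1 ≤ -r := by linarith
        have h2 : δ * (M / δ + 1) ≤ δ * (-r) := by nlinarith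
        have h3 : δ * (M / δ + 1) = M + δ := by field_simp
        rw [hrabs] at hx; nlinarith
      have := hbd x hMx
      have hxpos : (0:ℝ) < |x| := lt_of_lt_of_le hM hMx
      rw [div_le_iff₀ hxpos] at this
      nlinarith [abs_nonneg r]
    · intro ε hε
      obtain ⟨M, hMbd⟩ := hg_locbdd (Set.Icc (-1) 1) isCompact_Icc
      have hM0 : 0 ≤ M := le_trans (abs_nonneg _) (hMbd 0 (by norm_num))
      refine ⟨-(M / ε + 1), by nlinarith [div_nonneg hM0 hε.le], fun r hr => ?_⟩
      have hr0 : r < 0 := lt_of_le_of_lt hr (by nlinarith [div_nonneg hM0 hε.le])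
      have hexp : Real.exp (-(ε * |r|)) ≤ Real.exp (-M) := by
        apply Real.exp_le_exp.2
        rw [abs_of_neg hr0]
        have : M / ε + 1 ≤ -r := by linarith
        have h2 : ε * (M / ε + 1) ≤ ε * (-r) := by nlinarith
        have h3 : ε * (M / ε + 1) = M + ε := by field_simp
        nlinarith
      calc ENNReal.ofReal (Real.exp (-(ε * |r|))) ≤ ENNReal.ofReal (Real.exp (-M)) :=
            ENNReal.ofReal_le_ofReal hexp
        _ ≤ ENNReal.ofReal (Real.exp (-M)) * volume (Set.Icc (-1:ℝ) 1) := by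
            apply le_mul_of_one_le_right zero_le
            rw [Real.volume_Icc]
            exact ENNReal.one_le_ofReal.2 (by norm_num)
        _ = ∫⁻ _ in Set.Icc (-1:ℝ) 1, ENNReal.ofReal (Real.exp (-M)) :=
            (setLIntegral_const _ _).symm
        _ ≤ ∫⁻ x in Set.Icc (-1:ℝ) 1, ENNReal.ofReal (g x) := by
            apply setLIntegral_mono hg_meas.ennreal_ofReal
            intro x hxI
            apply ENNReal.ofReal_le_ofReal
            have hlb : -M ≤ Real.log (g x) := by
              have := hMbd x hxI
              have := abs_le.1 this
              linarith [this.1]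
            calc Real.exp (-M) ≤ Real.exp (Real.log (g x)) := Real.exp_le_exp.2 hlb
              _ = g x := Real.exp_log (hg_pos x)

lemma case_pos (lam : ℝ) (hlam : 0 < lam) (g : ℝ → ℝ)
    (hg_meas : Measurable g) (hg_pos : ∀ x, 0 < g x)
    (hg_locbdd : ∀ K : Set ℝ, IsCompact K → ∃ M : ℝ, ∀ x ∈ K, |Real.log (g x)| ≤ M) :
    MemF lam (fun _ x => g x) ↔
      ((∃ m < lam, ∀ᶠ x in atBot, Real.log (g x) / |x| ≤ m) ∧
        Tendsto (fun x => Real.log (g x) / x) atTop (nhds lam)) := by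
  constructor
  · rintro ⟨-, -, h⟩
    rw [if_neg hlam.ne'] at h
    obtain ⟨δ₀, ⟨hδ₀pos, hδ₀lt⟩, W1, W2, W3⟩ := h
    rw [abs_of_pos hlam] at hδ₀lt
    constructor
    · -- part (a): bound at -∞ from W3
      obtain ⟨μ, hμ, W3⟩ := W3
      have hμ' : -lam < μ := by
        have := (lt_div_iff₀ hlam).1 hμ; linarith
      set ε := (lam + μ) / 4 with hεdef
      have hε : 0 < ε := by simp only [hεdef]; linarith
      obtain ⟨R, hR, hW⟩ := W3 ε hε
      refine ⟨(lam - μ) / 2, by linarith, ?_⟩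
      filter_upwards [eventually_le_atBot R] with x hx
      have hx0 : x < 0 := lt_of_le_of_lt hx hR
      have hlx := hW R le_rfl x (mul_nonpos_of_nonneg_of_nonpos hlam.le hx0.le)
      rw [abs_of_neg hx0, abs_of_neg hR] at *
      rw [div_le_iff₀ (by linarith : (0:ℝ) < -x)]
      nlinarith
    · -- part (b): limit at +∞
      rw [tendsto_order]
      constructor
      · intro a ha
        set ε := (lam - a) * lam / 2 with hεdef
        have hε : 0 < ε := by simp only [hεdef]; nlinarith
        obtain ⟨R, hR, hW⟩ := W1 ε hε
        filter_upwards [eventually_ge_atTop (max (lam * (-R)) 1)] with x hx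
        have hx1 : (1:ℝ) ≤ x := le_trans (le_max_right _ _) hx
        have hx2 : lam * (-R) ≤ x := le_trans (le_max_left _ _) hx
        set r := -x / lam with hrdef
        have hr0 : r < 0 := div_neg_of_neg_of_pos (by linarith) hlam
        have hrR : r ≤ R := by
          rw [hrdef, div_le_iff₀ hlam]; nlinarith
        have hxne : x ≠ 0 := by linarith
        have hxr : x / r + lam = 0 := by
          rw [hrdef, div_div_eq_mul_div, mul_comm, mul_div_assoc, div_neg, div_self hxne]
          ring
        have hlx := hW r hrR x (by rw [hxr]; simp [hδ₀pos.le])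
        have hmr : -r = x / lam := by rw [hrdef]; ring
        rw [abs_of_neg hr0, hmr] at hlx
        have hxl : ε * (x / lam) = (lam - a) / 2 * x := by
          rw [hεdef]; field_simp
        rw [lt_div_iff₀ (by linarith : (0:ℝ) < x)]
        beta_reduce at hlx
        nlinarith
      · intro a ha
        set ε := (a - lam) / 4 with hεdef
        have hε : 0 < ε := by simp only [hεdef]; linarith
        obtain ⟨R, hR, hW⟩ := W2 δ₀ ⟨hδ₀pos, le_rfl⟩ ε hε
        filter_upwards [eventually_ge_atTop (max ((lam + δ₀) * (-R)) (max (-R) 1))] with x hx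
        have hx1 : (1:ℝ) ≤ x := le_trans (le_max_right _ _) (le_trans (le_max_right _ _) hx)
        have hxR : -R ≤ x := le_trans (le_max_left _ _) (le_trans (le_max_right _ _) hx)
        have hx2 : (lam + δ₀) * (-R) ≤ x := le_trans (le_max_left _ _) hx
        have hdr : x / R ≤ -(lam + δ₀) := by
          rw [div_le_iff_of_neg hR]; nlinarith
        have habs : δ₀ ≤ |x / R + lam| := le_abs.2 (Or.inr (by linarith))
        have hlx := hW R le_rfl x (by positivity) habs
        rw [abs_of_neg hR, abs_of_pos (by linarith : (0:ℝ) < x)] at hlx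
        rw [div_lt_iff₀ (by linarith : (0:ℝ) < x)]
        beta_reduce at hlx
        nlinarith
  · rintro ⟨⟨m, hm, ha⟩, hb⟩
    refine ⟨fun _ _ => hg_meas, fun _ _ x => hg_pos x, ?_⟩
    rw [if_neg hlam.ne']
    refine ⟨lam / 2, ⟨by positivity, by rw [abs_of_pos hlam]; linarith⟩, ?_, ?_, ?_⟩
    · -- W1
      intro ε hε
      set ε' := 2 * ε / (3 * lam) with hε'def
      have hε' : 0 < ε' := by positivity
      obtain ⟨X, hX⟩ := eventually_atTop.1 (hb.eventually (eventually_ge_nhds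
        (by linarith : lam - ε' < lam)))
      have hneg1 : -(2 * max X 1 / lam + 1) < 0 := by
        have : (0:ℝ) < 2 * max X 1 / lam + 1 := by positivity
        linarith
      refine ⟨-(2 * max X 1 / lam + 1), hneg1, fun r hr x hxr => ?_⟩
      have hr0 : r < 0 := lt_of_le_of_lt hr hneg1
      obtain ⟨h1, h2⟩ := abs_le.1 hxr
      have hxlo : lam / 2 * (-r) ≤ x := by
        have := mul_le_mul_of_nonpos_right (by linarith : x / r ≤ -(lam / 2)) hr0.le
        rw [div_mul_cancel₀ _ hr0.ne] at this
        nlinarith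
      have hxhi : x ≤ 3 * lam / 2 * (-r) := by
        have := mul_le_mul_of_nonpos_right (by linarith : -(3 * lam / 2) ≤ x / r) hr0.le
        rw [div_mul_cancel₀ _ hr0.ne] at this
        nlinarith
      have hrbig : 2 * max X 1 / lam + 1 ≤ -r := by linarith
      have hxX : max X 1 ≤ x := by
        have h3 : lam / 2 * (2 * max X 1 / lam + 1) ≤ lam / 2 * (-r) :=
          mul_le_mul_of_nonneg_left hrbig (by positivity)
        have h4 : lam / 2 * (2 * max X 1 / lam) = max X 1 := by field_simp
        nlinarith
      have hx1 : (1:ℝ) ≤ x := le_trans (le_max_right _ _) hxX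
      have hlo := hX x (le_trans (le_max_left _ _) hxX)
      rw [le_div_iff₀ (by linarith : (0:ℝ) < x)] at hlo
      rw [abs_of_neg hr0]
      beta_reduce
      have hkey : ε' * (3 * lam / 2 * (-r)) = ε * (-r) := by rw [hε'def]; field_simp
      have h5 : ε' * x ≤ ε' * (3 * lam / 2 * (-r)) := mul_le_mul_of_nonneg_left hxhi hε'.le
      have h6 : (lam - ε') * x = lam * x - ε' * x := by ring
      linarith
    · -- W2
      intro δ hδ ε hε
      obtain ⟨X, hX⟩ := eventually_atTop.1 (hb.eventually (eventually_le_nhds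
        (by linarith : lam < lam + ε)))
      obtain ⟨M, hMbd⟩ := hg_locbdd (Set.Icc 0 (max X 1)) isCompact_Icc
      have hM0 : 0 ≤ M := le_trans (abs_nonneg _) (hMbd 0 (by simp [le_max_iff]))
      have hneg1 : -(M / ε + 1) < 0 := by
        have : (0:ℝ) < M / ε + 1 := by positivity
        linarith
      refine ⟨-(M / ε + 1), hneg1, fun r hr x hx0 _ => ?_⟩
      have hr0 : r < 0 := lt_of_le_of_lt hr hneg1
      have hx0' : 0 ≤ x := nonneg_of_mul_nonneg_right hx0 hlam
      have hεr : M ≤ ε * |r| := by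
        rw [abs_of_neg hr0]
        have h2 : ε * (M / ε + 1) ≤ ε * (-r) :=
          mul_le_mul_of_nonneg_left (by linarith) hε.le
        have h3 : ε * (M / ε + 1) = M + ε := by field_simp
        linarith
      beta_reduce
      rcases le_or_gt x (max X 1) with hc | hc
      · obtain ⟨hL1, hL2⟩ := abs_le.1 (hMbd x ⟨hx0', hc⟩)
        have h7 : 0 ≤ lam * x := hx0
        have h8 : 0 ≤ ε * |x| := mul_nonneg hε.le (abs_nonneg x)
        linarith
      · have hXx : X ≤ x := le_trans (le_max_left _ _) hc.le
        have := hX x hXx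
        have hx1 : (0:ℝ) < x := lt_of_lt_of_le (lt_of_lt_of_le one_pos (le_max_right X 1)) hc.le
        rw [div_le_iff₀ hx1] at this
        rw [abs_of_pos hx1]
        nlinarith [abs_nonneg r]
    · -- W3
      refine ⟨-m, by rw [lt_div_iff₀ hlam]; linarith, ?_⟩
      intro ε hε
      obtain ⟨X, hX⟩ := eventually_atBot.1 ha
      obtain ⟨X', hX'X, hX'neg⟩ : ∃ X', X' ≤ X ∧ X' < 0 :=
        ⟨min X (-1), min_le_left _ _, lt_of_le_of_lt (min_le_right _ _) (by norm_num)⟩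
      obtain ⟨M, hMbd⟩ := hg_locbdd (Set.Icc X' 0) isCompact_Icc
      have hM0 : 0 ≤ M := le_trans (abs_nonneg _) (hMbd 0 ⟨hX'neg.le, le_rfl⟩)
      obtain ⟨C, hC0, hCsum⟩ : ∃ C, 0 ≤ C ∧ M + |m| * (-X') ≤ C := by
        refine ⟨M + |m| * (-X'), ?_, le_rfl⟩
        nlinarith [mul_nonneg (abs_nonneg m) (by linarith : (0:ℝ) ≤ -X')]
      have hneg1 : -(C / ε + 1) < 0 := by
        have : (0:ℝ) < C / ε + 1 := by positivity
        linarith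
      refine ⟨-(C / ε + 1), hneg1, fun r hr x hx0 => ?_⟩
      have hr0 : r < 0 := lt_of_le_of_lt hr hneg1
      have hx0' : x ≤ 0 := nonpos_of_mul_nonpos_right hx0 hlam
      have hεr : C ≤ ε * |r| := by
        rw [abs_of_neg hr0]
        have h2 : ε * (C / ε + 1) ≤ ε * (-r) :=
          mul_le_mul_of_nonneg_left (by linarith) hε.le
        have h3 : ε * (C / ε + 1) = C + ε := by field_simp
        linarith
      beta_reduce
      rcases le_or_gt X' x with hc | hc
      · obtain ⟨hL1, hL2⟩ := abs_le.1 (hMbd x ⟨hc, hx0'⟩)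
        have hmx : m * x ≤ |m| * (-X') := by
          calc m * x ≤ |m * x| := le_abs_self _
            _ = |m| * |x| := abs_mul _ _
            _ = |m| * (-x) := by rw [abs_of_nonpos hx0']
            _ ≤ |m| * (-X') := mul_le_mul_of_nonneg_left (by linarith) (abs_nonneg m)
        have h8 : 0 ≤ ε * |x| := mul_nonneg hε.le (abs_nonneg x)
        have h9 : Real.log (g x) - -m * x = Real.log (g x) + m * x := by ring
        linarith
      · have hxX : x ≤ X := le_trans hc.le hX'X
        have hlog := hX x hxX
        have hxneg : x < 0 := lt_of_lt_of_le hc hX'neg.le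
        rw [abs_of_neg hxneg, div_le_iff₀ (by linarith : (0:ℝ) < -x)] at hlog
        rw [abs_of_neg hxneg]
        have h8 : 0 ≤ ε * (-r) := mul_nonneg hε.le (by linarith)
        have h9 : 0 ≤ ε * (-x) := mul_nonneg hε.le (by linarith)
        rw [abs_of_neg hr0]
        nlinarith

set_option maxHeartbeats 1600000 in
lemma case_neg (lam : ℝ) (hlam : lam < 0) (g : ℝ → ℝ)
    (hg_meas : Measurable g) (hg_pos : ∀ x, 0 < g x)
    (hg_locbdd : ∀ K : Set ℝ, IsCompact K → ∃ M : ℝ, ∀ x ∈ K, |Real.log (g x)| ≤ M) :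
    MemF lam (fun _ x => g x) ↔
      (Tendsto (fun x => Real.log (g x) / |x|) atBot (nhds (|lam|)) ∧
        ∃ m < |lam|, ∀ᶠ x in atTop, Real.log (g x) / x ≤ m) := by
  have hlne : lam ≠ 0 := hlam.ne
  have hnl : (0:ℝ) < -lam := by linarith
  rw [abs_of_neg hlam]
  constructor
  · rintro ⟨-, -, h⟩
    rw [if_neg hlne] at h
    obtain ⟨δ₀, ⟨hδ₀pos, hδ₀lt⟩, W1, W2, W3⟩ := h
    rw [abs_of_neg hlam] at hδ₀lt
    constructor
    · -- tendsto at -∞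
      rw [tendsto_order]
      constructor
      · intro a ha
        set ε := (-lam - a) * (-lam) / 2 with hεdef
        have hε : 0 < ε := by simp only [hεdef]; nlinarith
        obtain ⟨R, hR, hW⟩ := W1 ε hε
        filter_upwards [eventually_le_atBot (min (R * (-lam)) (-1))] with x hx
        have hx1 : x ≤ -1 := le_trans hx (min_le_right _ _)
        have hx2 : x ≤ R * (-lam) := le_trans hx (min_le_left _ _)
        have hxne : x ≠ 0 := by linarith
        set r := x / (-lam) with hrdef
        have hr0 : r < 0 := div_neg_of_neg_of_pos (by linarith) hnl
        have hrR : r ≤ R := by rw [hrdef, div_le_iff₀ hnl]; linarith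
        have hxr : x / r + lam = 0 := by
          rw [hrdef, div_div_eq_mul_div, mul_comm, mul_div_assoc, div_self hxne]
          ring
        have hlx := hW r hrR x (by rw [hxr]; simp [hδ₀pos.le])
        have hmr : -r = -x / (-lam) := by rw [hrdef]; ring
        rw [abs_of_neg hr0, hmr] at hlx
        have hxl : ε * (-x / (-lam)) = (-lam - a) / 2 * (-x) := by
          rw [hεdef]; field_simp
        rw [abs_of_neg (by linarith : x < 0), lt_div_iff₀ (by linarith : (0:ℝ) < -x)]
        beta_reduce at hlx
        nlinarith [mul_le_mul_of_nonneg_left (by linarith : (1:ℝ) ≤ -x)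
          (by linarith : (0:ℝ) ≤ (-lam - a) / 2)]
      · intro a ha
        set ε := (a + lam) / 4 with hεdef
        have hε : 0 < ε := by simp only [hεdef]; linarith
        obtain ⟨R, hR, hW⟩ := W2 δ₀ ⟨hδ₀pos, le_rfl⟩ ε hε
        filter_upwards [eventually_le_atBot (min ((δ₀ - lam) * R) (min R (-1)))] with x hx
        have hx1 : x ≤ -1 := le_trans hx (le_trans (min_le_right _ _) (min_le_right _ _))
        have hxR : x ≤ R := le_trans hx (le_trans (min_le_right _ _) (min_le_left _ _))
        have hx2 : x ≤ (δ₀ - lam) * R := le_trans hx (min_le_left _ _)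
        have hdr : δ₀ - lam ≤ x / R := (le_div_iff_of_neg hR).2 hx2
        have habs : δ₀ ≤ |x / R + lam| := le_abs.2 (Or.inl (by linarith))
        have hlx := hW R le_rfl x (by nlinarith) habs
        rw [abs_of_neg hR, abs_of_neg (by linarith : x < 0)] at hlx
        rw [abs_of_neg (by linarith : x < 0), div_lt_iff₀ (by linarith : (0:ℝ) < -x)]
        beta_reduce at hlx
        nlinarith
    · -- part (b): ∃ m < -lam at +∞
      obtain ⟨μ, hμ, W3⟩ := W3
      have hμ' : μ < -lam := by
        have := (lt_div_iff_of_neg hlam).1 hμ; linarith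
      set ε := (-lam - μ) / 4 with hεdef
      have hε : 0 < ε := by simp only [hεdef]; linarith
      obtain ⟨R, hR, hW⟩ := W3 ε hε
      refine ⟨(μ - lam) / 2, by linarith, ?_⟩
      filter_upwards [eventually_ge_atTop (max (-R) 1)] with x hx
      have hx1 : (1:ℝ) ≤ x := le_trans (le_max_right _ _) hx
      have hxR : -R ≤ x := le_trans (le_max_left _ _) hx
      have hlx := hW R le_rfl x (mul_nonpos_of_nonpos_of_nonneg hlam.le (by linarith))
      rw [abs_of_neg hR, abs_of_pos (by linarith : (0:ℝ) < x)] at hlx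
      beta_reduce at hlx
      rw [div_le_iff₀ (by linarith : (0:ℝ) < x)]
      nlinarith
  · rintro ⟨ht, m, hm, ha⟩
    refine ⟨fun _ _ => hg_meas, fun _ _ x => hg_pos x, ?_⟩
    rw [if_neg hlne]
    refine ⟨-lam / 2, ⟨by linarith, by rw [abs_of_neg hlam]; linarith⟩, ?_, ?_, ?_⟩
    · -- W1
      intro ε hε
      set ε' := 2 * ε / (3 * (-lam)) with hε'def
      have hε' : 0 < ε' := by rw [hε'def]; positivity
      obtain ⟨X, hX⟩ := eventually_atBot.1 (ht.eventually (eventually_ge_nhds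
        (by linarith : -lam - ε' < -lam)))
      have hneg1 : -(2 * max (-X) 1 / (-lam) + 1) < 0 := by
        have : (0:ℝ) < 2 * max (-X) 1 / (-lam) + 1 := by positivity
        linarith
      refine ⟨-(2 * max (-X) 1 / (-lam) + 1), hneg1, fun r hr x hxr => ?_⟩
      have hr0 : r < 0 := lt_of_le_of_lt hr hneg1
      obtain ⟨h1, h2⟩ := abs_le.1 hxr
      have hxhi : x ≤ -lam / 2 * r := by
        have := mul_le_mul_of_nonpos_right (by linarith : -lam / 2 ≤ x / r) hr0.le
        rw [div_mul_cancel₀ _ hr0.ne] at this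
        linarith
      have hxlo : 3 * (-lam) / 2 * r ≤ x := by
        have := mul_le_mul_of_nonpos_right (by linarith : x / r ≤ 3 * (-lam) / 2) hr0.le
        rw [div_mul_cancel₀ _ hr0.ne] at this
        linarith
      have hrbig : 2 * max (-X) 1 / (-lam) + 1 ≤ -r := by linarith
      have hxX : max (-X) 1 ≤ -x := by
        have h3 : -lam / 2 * (2 * max (-X) 1 / (-lam) + 1) ≤ -lam / 2 * (-r) :=
          mul_le_mul_of_nonneg_left hrbig (by linarith)
        have h4 : -lam / 2 * (2 * max (-X) 1 / (-lam)) = max (-X) 1 := by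
          field_simp
          all_goals ring
        nlinarith
      have hx1 : x ≤ -1 := by
        have := le_trans (le_max_right (-X) 1) hxX; linarith
      have hxX' : x ≤ X := by
        have := le_trans (le_max_left (-X) 1) hxX; linarith
      have hlo := hX x hxX'
      rw [abs_of_neg (by linarith : x < 0), le_div_iff₀ (by linarith : (0:ℝ) < -x)] at hlo
      rw [abs_of_neg hr0]
      beta_reduce
      have hkey : ε' * (3 * (-lam) / 2 * (-r)) = ε * (-r) := by
        rw [hε'def]; field_simp
      have h5 : ε' * (-x) ≤ ε' * (3 * (-lam) / 2 * (-r)) :=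
        mul_le_mul_of_nonneg_left (by linarith) hε'.le
      nlinarith
    · -- W2
      intro δ hδ ε hε
      obtain ⟨X, hX⟩ := eventually_atBot.1 (ht.eventually (eventually_le_nhds
        (by linarith : -lam < -lam + ε)))
      obtain ⟨X', hX'X, hX'neg⟩ : ∃ X', X' ≤ X ∧ X' ≤ -1 :=
        ⟨min X (-1), min_le_left _ _, min_le_right _ _⟩
      obtain ⟨M, hMbd⟩ := hg_locbdd (Set.Icc X' 0) isCompact_Icc
      have hM0 : 0 ≤ M := le_trans (abs_nonneg _) (hMbd 0 ⟨by linarith, le_rfl⟩)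
      have hneg1 : -(M / ε + 1) < 0 := by
        have : (0:ℝ) < M / ε + 1 := by positivity
        linarith
      refine ⟨-(M / ε + 1), hneg1, fun r hr x hx0 _ => ?_⟩
      have hr0 : r < 0 := lt_of_le_of_lt hr hneg1
      have hx0' : x ≤ 0 := by nlinarith
      have hεr : M ≤ ε * |r| := by
        rw [abs_of_neg hr0]
        have h2 : ε * (M / ε + 1) ≤ ε * (-r) :=
          mul_le_mul_of_nonneg_left (by linarith) hε.le
        have h3 : ε * (M / ε + 1) = M + ε := by field_simp
        linarith
      beta_reduce
      rcases le_or_gt X' x with hc | hc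
      · obtain ⟨hL1, hL2⟩ := abs_le.1 (hMbd x ⟨hc, hx0'⟩)
        have h7 : 0 ≤ lam * x := hx0
        have h8 : 0 ≤ ε * |x| := mul_nonneg hε.le (abs_nonneg x)
        linarith
      · have hxX : x ≤ X := by linarith
        have hlog := hX x hxX
        have hxneg : x < 0 := by linarith
        rw [abs_of_neg hxneg, div_le_iff₀ (by linarith : (0:ℝ) < -x)] at hlog
        rw [abs_of_neg hxneg]
        have h8 : 0 ≤ ε * (-r) := mul_nonneg hε.le (by linarith)
        rw [abs_of_neg hr0]
        nlinarith
    · -- W3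
      refine ⟨m, by rw [lt_div_iff_of_neg hlam]; linarith, ?_⟩
      intro ε hε
      obtain ⟨X, hX⟩ := eventually_atTop.1 ha
      obtain ⟨X'', hX''X, hX''1⟩ : ∃ X'', X ≤ X'' ∧ 1 ≤ X'' :=
        ⟨max X 1, le_max_left _ _, le_max_right _ _⟩
      obtain ⟨M, hMbd⟩ := hg_locbdd (Set.Icc 0 X'') isCompact_Icc
      have hM0 : 0 ≤ M := le_trans (abs_nonneg _) (hMbd 0 ⟨le_rfl, by linarith⟩)
      obtain ⟨C, hC0, hCsum⟩ : ∃ C, 0 ≤ C ∧ M + |m| * X'' ≤ C := by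
        refine ⟨M + |m| * X'', ?_, le_rfl⟩
        have := mul_nonneg (abs_nonneg m) (by linarith : (0:ℝ) ≤ X'')
        linarith
      have hneg1 : -(C / ε + 1) < 0 := by
        have : (0:ℝ) < C / ε + 1 := by positivity
        linarith
      refine ⟨-(C / ε + 1), hneg1, fun r hr x hx0 => ?_⟩
      have hr0 : r < 0 := lt_of_le_of_lt hr hneg1
      have hx0' : 0 ≤ x := by nlinarith
      have hεr : C ≤ ε * |r| := by
        rw [abs_of_neg hr0]
        have h2 : ε * (C / ε + 1) ≤ ε * (-r) :=
          mul_le_mul_of_nonneg_left (by linarith) hε.le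
        have h3 : ε * (C / ε + 1) = C + ε := by field_simp
        linarith
      beta_reduce
      rcases le_or_gt x X'' with hc | hc
      · obtain ⟨hL1, hL2⟩ := abs_le.1 (hMbd x ⟨hx0', hc⟩)
        have hmx : -(m * x) ≤ |m| * X'' := by
          calc -(m * x) ≤ |m * x| := neg_le_abs _
            _ = |m| * |x| := abs_mul _ _
            _ = |m| * x := by rw [abs_of_nonneg hx0']
            _ ≤ |m| * X'' := mul_le_mul_of_nonneg_left hc (abs_nonneg m)
        have h8 : 0 ≤ ε * |x| := mul_nonneg hε.le (abs_nonneg x)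
        linarith
      · have hxX : X ≤ x := by linarith
        have hlog := hX x hxX
        have hxpos : (0:ℝ) < x := by linarith
        rw [div_le_iff₀ hxpos] at hlog
        rw [abs_of_pos hxpos, abs_of_neg hr0]
        have h8 : 0 ≤ ε * (-r) := mul_nonneg hε.le (by linarith)
        have h9 : 0 ≤ ε * x := mul_nonneg hε.le (by linarith)
        linarith

/-- Characterization of membership of time-independent initial data in `𝔽_λ`
(Lemma on special members of `𝔽_λ`).  The condition "limsup < λ (possibly −∞)" is
expressed as "∃ m < λ with the function eventually ≤ m", and
"limsup ≤ 0 (possibly −∞)" in its equivalent ε-form. -/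
theorem membership_in_F_characterization
    (lam : ℝ) (g : ℝ → ℝ)
    (hg_meas : Measurable g) (hg_pos : ∀ x, 0 < g x)
    (hg_locbdd : ∀ K : Set ℝ, IsCompact K → ∃ M : ℝ, ∀ x ∈ K, |Real.log (g x)| ≤ M) :
    MemF lam (fun _ x => g x) ↔
      ((0 < lam →
          ((∃ m < lam, ∀ᶠ x in atBot, Real.log (g x) / |x| ≤ m) ∧
            Tendsto (fun x => Real.log (g x) / x) atTop (nhds lam))) ∧
        (lam < 0 →
          (Tendsto (fun x => Real.log (g x) / |x|) atBot (nhds (|lam|)) ∧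
            (∃ m < |lam|, ∀ᶠ x in atTop, Real.log (g x) / x ≤ m))) ∧
        (lam = 0 →
          ∀ ε > (0 : ℝ), ∃ M > (0 : ℝ), ∀ x : ℝ, M ≤ |x| → Real.log (g x) / |x| ≤ ε)) := by
  rcases lt_trichotomy lam 0 with h | h | h
  · rw [case_neg lam h g hg_meas hg_pos hg_locbdd]
    constructor
    · intro H
      exact ⟨fun hp => (lt_asymm h hp).elim, fun _ => H, fun hz => (h.ne hz).elim⟩
    · intro H
      exact H.2.1 h
  · subst h
    rw [case_zero g hg_meas hg_pos hg_locbdd]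
    constructor
    · intro H
      exact ⟨fun hp => (lt_irrefl 0 hp).elim, fun hn => (lt_irrefl 0 hn).elim, fun _ => H⟩
    · intro H
      exact H.2.2 rfl
  · rw [case_pos lam h g hg_meas hg_pos hg_locbdd]
    constructor
    · intro H
      exact ⟨fun _ => H, fun hn => (lt_asymm h hn).elim, fun hz => (h.ne' hz).elim⟩
    · intro H
      exact H.1 h
end

section
/- Equip the space of Borel measures on ℝ with the σ-algebra generated by the evaluation maps μ ↦ μ(B) over Borel sets B ⊆ ℝ. Then the set { μ : there exists a continuous function f : ℝ → (0,∞) such that μ(B) = ∫_B f(x) dx for every Borel set B } is a measurable subset of this space of measures. -/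
open MeasureTheory Set Filter Topology
open scoped ENNReal NNReal

namespace DensityAux

noncomputable section

/-- Averaged mass of `μ` over the interval `[r, r + 1/(n+1))`. -/
def A (r : ℚ) (n : ℕ) (μ : Measure ℝ) : ℝ≥0∞ :=
  (n + 1 : ℝ≥0∞) * μ (Set.Ico (r : ℝ) (r + 1 / (n + 1)))

/-- `limsup` of the averaged masses: candidate density value at the rational `r`. -/
def L (r : ℚ) (μ : Measure ℝ) : ℝ≥0∞ := Filter.limsup (fun n => A r n μ) Filter.atTop

/-- A measure is sandwiched between lower and upper Darboux-type bounds given by `Lf`. -/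
def Sandwich (Lf : ℚ → ℝ≥0∞) (m : Measure ℝ) : Prop :=
  ∀ p q : ℚ, p < q →
    ENNReal.ofReal ((q : ℝ) - p) * (⨅ r : {r : ℚ // p ≤ r ∧ r ≤ q}, Lf r) ≤
        m (Set.Ico (p : ℝ) q) ∧
      m (Set.Ico (p : ℝ) q) ≤
        ENNReal.ofReal ((q : ℝ) - p) * (⨆ r : {r : ℚ // p ≤ r ∧ r ≤ q}, Lf r)

/-- Uniform-continuity-type oscillation bound for `Lf` on rationals. -/
def Osc (Lf : ℚ → ℝ≥0∞) : Prop :=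
  ∀ N i : ℕ, ∃ j : ℕ, ∀ r s : ℚ, |(r : ℝ)| ≤ N → |(s : ℝ)| ≤ N →
    |(r : ℝ) - s| ≤ 1 / (j + 1) → Lf r ≤ Lf s + ENNReal.ofReal (1 / (i + 1))

/-- The countable characterization of having a positive continuous density. -/
def Cond (μ : Measure ℝ) : Prop :=
  (∀ r : ℚ, L r μ ≠ ∞) ∧
  Osc (fun r => L r μ) ∧
  (∀ N : ℕ, ∃ k : ℕ, ∀ r : ℚ, |(r : ℝ)| ≤ N →
    ENNReal.ofReal (1 / (k + 1)) ≤ L r μ) ∧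
  Sandwich (fun r => L r μ) μ

theorem measurable_L (r : ℚ) : Measurable (L r) := by
  apply Measurable.limsup
  intro n
  exact (Measure.measurable_coe measurableSet_Ico).const_mul _


/-! ### Basic analytic lemmas -/

theorem lintegral_Ico_lower (f : ℝ → ℝ) (hf : Continuous f) {a b : ℝ} {m : ℝ≥0∞}
    (hm : ∀ t ∈ Set.Ico a b, m ≤ ENNReal.ofReal (f t)) :
    ENNReal.ofReal (b - a) * m ≤ ∫⁻ t in Set.Ico a b, ENNReal.ofReal (f t) := by
  have h1 : ∫⁻ _ in Set.Ico a b, m = m * volume (Set.Ico a b) := setLIntegral_const _ _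
  calc ENNReal.ofReal (b - a) * m = m * volume (Set.Ico a b) := by
        rw [Real.volume_Ico, mul_comm]
    _ = ∫⁻ _ in Set.Ico a b, m := h1.symm
    _ ≤ _ := setLIntegral_mono (hf.measurable.ennreal_ofReal) hm

theorem lintegral_Ico_upper (f : ℝ → ℝ) {a b : ℝ} {M : ℝ≥0∞}
    (hM : ∀ t ∈ Set.Ico a b, ENNReal.ofReal (f t) ≤ M) :
    (∫⁻ t in Set.Ico a b, ENNReal.ofReal (f t)) ≤ ENNReal.ofReal (b - a) * M := by
  calc (∫⁻ t in Set.Ico a b, ENNReal.ofReal (f t)) ≤ ∫⁻ _ in Set.Ico a b, M :=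
        setLIntegral_mono measurable_const hM
    _ = M * volume (Set.Ico a b) := setLIntegral_const _ _
    _ = ENNReal.ofReal (b - a) * M := by rw [Real.volume_Ico, mul_comm]

theorem nat_mul_ofReal_one_div (n : ℕ) :
    (n + 1 : ℝ≥0∞) * ENNReal.ofReal (1 / (n + 1 : ℝ)) = 1 := by
  have hn : (0:ℝ) < (n:ℝ) + 1 := by positivity
  have h1 : (n + 1 : ℝ≥0∞) = ENNReal.ofReal ((n : ℝ) + 1) := by
    rw [ENNReal.ofReal_add (by positivity) zero_le_one, ENNReal.ofReal_natCast,
      ENNReal.ofReal_one]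
  rw [h1, ← ENNReal.ofReal_mul hn.le, mul_one_div_cancel hn.ne', ENNReal.ofReal_one]

theorem avg_tendsto (f : ℝ → ℝ) (hf : Continuous f) (x : ℝ) :
    Tendsto (fun n : ℕ =>
        (n + 1 : ℝ≥0∞) * ∫⁻ t in Set.Ico x (x + 1 / (n + 1)), ENNReal.ofReal (f t))
      atTop (𝓝 (ENNReal.ofReal (f x))) := by
  rw [ENNReal.tendsto_nhds ENNReal.ofReal_ne_top]
  intro ε hε
  obtain ⟨ε', hε'pos, hε'le⟩ : ∃ ε' : ℝ, 0 < ε' ∧ ENNReal.ofReal ε' ≤ ε := by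
    rcases eq_or_ne ε ∞ with rfl | htop
    · exact ⟨1, one_pos, le_top⟩
    · exact ⟨ε.toReal, ENNReal.toReal_pos hε.ne' htop, by rw [ENNReal.ofReal_toReal htop]⟩
  obtain ⟨δ, hδpos, hδ⟩ := Metric.continuous_iff.mp hf x ε' hε'pos
  obtain ⟨n0, hn0⟩ := exists_nat_one_div_lt hδpos
  rw [eventually_atTop]
  refine ⟨n0, fun n hn => ?_⟩
  have hlen : (0:ℝ) < 1 / ((n:ℝ) + 1) := by positivity
  have hle : 1 / ((n:ℝ) + 1) < δ := by
    refine lt_of_le_of_lt ?_ hn0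
    apply one_div_le_one_div_of_le (by positivity)
    exact_mod_cast add_le_add_left (Nat.cast_le.mpr hn) 1
  have hbound : ∀ t ∈ Set.Ico x (x + 1 / ((n:ℝ) + 1)),
      f x - ε' ≤ f t ∧ f t ≤ f x + ε' := by
    intro t ht
    have hd : dist t x < δ := by
      rw [Real.dist_eq, abs_lt]
      constructor <;> [linarith [ht.1, hlen]; linarith [ht.2, hle]]
    have := hδ t hd
    rw [Real.dist_eq, abs_lt] at this
    constructor <;> linarith [this.1, this.2]
  have key := nat_mul_ofReal_one_div n
  constructor
  · -- lower bound
    have hlow : ENNReal.ofReal (x + 1 / ((n:ℝ) + 1) - x) * ENNReal.ofReal (f x - ε') ≤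
        ∫⁻ t in Set.Ico x (x + 1 / ((n:ℝ) + 1)), ENNReal.ofReal (f t) :=
      lintegral_Ico_lower f hf fun t ht =>
        ENNReal.ofReal_le_ofReal (hbound t ht).1
    have hsimp : x + 1 / ((n:ℝ) + 1) - x = 1 / ((n:ℝ) + 1) := by ring
    rw [hsimp] at hlow
    calc ENNReal.ofReal (f x) - ε ≤ ENNReal.ofReal (f x) - ENNReal.ofReal ε' :=
          tsub_le_tsub_left hε'le _
      _ ≤ ENNReal.ofReal (f x - ε') := by
          rw [ENNReal.ofReal_sub _ hε'pos.le]
      _ = (n + 1 : ℝ≥0∞) * (ENNReal.ofReal (1 / ((n:ℝ) + 1)) * ENNReal.ofReal (f x - ε')) := by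
          rw [← mul_assoc, key, one_mul]
      _ ≤ _ := mul_le_mul_right hlow _
  · -- upper bound
    have hup : (∫⁻ t in Set.Ico x (x + 1 / ((n:ℝ) + 1)), ENNReal.ofReal (f t)) ≤
        ENNReal.ofReal (x + 1 / ((n:ℝ) + 1) - x) * ENNReal.ofReal (f x + ε') :=
      lintegral_Ico_upper f fun t ht => ENNReal.ofReal_le_ofReal (hbound t ht).2
    have hsimp : x + 1 / ((n:ℝ) + 1) - x = 1 / ((n:ℝ) + 1) := by ring
    rw [hsimp] at hup
    calc (n + 1 : ℝ≥0∞) * ∫⁻ t in Set.Ico x (x + 1 / ((n:ℝ) + 1)), ENNReal.ofReal (f t)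
        ≤ (n + 1 : ℝ≥0∞) * (ENNReal.ofReal (1 / ((n:ℝ) + 1)) * ENNReal.ofReal (f x + ε')) :=
          mul_le_mul_right hup _
      _ = ENNReal.ofReal (f x + ε') := by rw [← mul_assoc, key, one_mul]
      _ ≤ ENNReal.ofReal (f x) + ENNReal.ofReal ε' := ENNReal.ofReal_add_le
      _ ≤ ENNReal.ofReal (f x) + ε := add_le_add_right hε'le _

/-- A sequence of rationals approaching `x` from below (weakly). -/
theorem exists_rat_seq (x : ℝ) :
    ∃ u : ℕ → ℚ, (∀ m : ℕ, x - 1 / (m + 1) ≤ (u m : ℝ) ∧ (u m : ℝ) ≤ x) ∧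
      Tendsto (fun m => (u m : ℝ)) atTop (𝓝 x) := by
  have h : ∀ m : ℕ, ∃ r : ℚ, x - 1 / ((m:ℝ) + 1) ≤ (r : ℝ) ∧ (r : ℝ) ≤ x := by
    intro m
    by_cases hx : ∃ r : ℚ, (r : ℝ) = x
    · obtain ⟨r, hr⟩ := hx
      refine ⟨r, by rw [hr]; linarith [show (0:ℝ) < 1/((m:ℝ)+1) by positivity], by rw [hr]⟩
    · obtain ⟨r, hr1, hr2⟩ := exists_rat_btwn
        (show x - 1 / ((m:ℝ) + 1) < x by linarith [show (0:ℝ) < 1/((m:ℝ)+1) by positivity])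
      exact ⟨r, hr1.le, hr2.le⟩
  choose u hu using h
  refine ⟨u, hu, ?_⟩
  have hl : Tendsto (fun m : ℕ => x - 1 / ((m:ℝ) + 1)) atTop (𝓝 x) := by
    have h1 := tendsto_one_div_add_atTop_nhds_zero_nat (𝕜 := ℝ)
    have h2 := Filter.Tendsto.sub (tendsto_const_nhds : Tendsto (fun _ : ℕ => x) atTop (𝓝 x)) h1
    simpa using h2
  exact tendsto_of_tendsto_of_tendsto_of_le_of_le hl tendsto_const_nhds
    (fun m => (hu m).1) (fun m => (hu m).2)

/-- A sequence of rationals inside `[p,q]` approaching `x ∈ [p,q]`. -/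
theorem exists_rat_seq_Icc (p q : ℚ) {x : ℝ} (hx : x ∈ Set.Icc (p : ℝ) q) :
    ∃ u : ℕ → ℚ, (∀ m : ℕ, p ≤ u m ∧ u m ≤ q) ∧
      Tendsto (fun m => (u m : ℝ)) atTop (𝓝 x) := by
  obtain ⟨u, hu, hut⟩ := exists_rat_seq x
  refine ⟨fun m => max p (u m), fun m => ⟨le_max_left _ _, ?_⟩, ?_⟩
  · rw [max_le_iff]
    constructor
    · exact_mod_cast le_trans hx.1 hx.2
    · have : (u m : ℝ) ≤ q := le_trans (hu m).2 hx.2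
      exact_mod_cast this
  · have : (fun m => ((max p (u m) : ℚ) : ℝ)) = fun m => max (p:ℝ) ((u m : ℚ) : ℝ) := by
      funext m; push_cast; rfl
    rw [this]
    have hmax : Tendsto (fun m => max (p:ℝ) ((u m : ℚ) : ℝ)) atTop (𝓝 (max (p:ℝ) x)) :=
      tendsto_const_nhds.max hut
    rwa [max_eq_right hx.1] at hmax

theorem iInf_rat_le (f : ℝ → ℝ) (hf : Continuous f) {p q : ℚ} {x : ℝ}
    (hx : x ∈ Set.Icc (p : ℝ) q) :
    (⨅ r : {r : ℚ // p ≤ r ∧ r ≤ q}, ENNReal.ofReal (f r)) ≤ ENNReal.ofReal (f x) := by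
  obtain ⟨u, hu, hut⟩ := exists_rat_seq_Icc p q hx
  have ht : Tendsto (fun m => ENNReal.ofReal (f (u m))) atTop (𝓝 (ENNReal.ofReal (f x))) :=
    (ENNReal.continuous_ofReal.tendsto _).comp ((hf.tendsto x).comp hut)
  exact ge_of_tendsto' ht fun m => iInf_le _ (⟨u m, hu m⟩ : {r : ℚ // p ≤ r ∧ r ≤ q})

theorem le_iSup_rat (f : ℝ → ℝ) (hf : Continuous f) {p q : ℚ} {x : ℝ}
    (hx : x ∈ Set.Icc (p : ℝ) q) :
    ENNReal.ofReal (f x) ≤ ⨆ r : {r : ℚ // p ≤ r ∧ r ≤ q}, ENNReal.ofReal (f r) := by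
  obtain ⟨u, hu, hut⟩ := exists_rat_seq_Icc p q hx
  have ht : Tendsto (fun m => ENNReal.ofReal (f (u m))) atTop (𝓝 (ENNReal.ofReal (f x))) :=
    (ENNReal.continuous_ofReal.tendsto _).comp ((hf.tendsto x).comp hut)
  exact le_of_tendsto' ht fun m => le_iSup_of_le (⟨u m, hu m⟩ : {r : ℚ // p ≤ r ∧ r ≤ q}) le_rfl

theorem osc_of_continuous (f : ℝ → ℝ) (hf : Continuous f) :
    Osc (fun r => ENNReal.ofReal (f r)) := by
  intro N i
  have hic : IsCompact (Set.Icc (-(N:ℝ)) N) := isCompact_Icc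
  have hUC := hic.uniformContinuousOn_of_continuous hf.continuousOn
  have hipos : (0:ℝ) < 1 / ((i:ℝ) + 1) := by positivity
  obtain ⟨δ, hδpos, hδ⟩ := Metric.uniformContinuousOn_iff.mp hUC _ hipos
  obtain ⟨j, hj⟩ := exists_nat_one_div_lt hδpos
  refine ⟨j, fun r s hr hs hrs => ?_⟩
  have hrm : (r:ℝ) ∈ Set.Icc (-(N:ℝ)) N := by
    rw [Set.mem_Icc]; constructor <;> [linarith [abs_le.mp hr |>.1]; exact (abs_le.mp hr).2]
  have hsm : (s:ℝ) ∈ Set.Icc (-(N:ℝ)) N := by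
    rw [Set.mem_Icc]; constructor <;> [linarith [abs_le.mp hs |>.1]; exact (abs_le.mp hs).2]
  have hd : dist (r:ℝ) (s:ℝ) < δ := by
    rw [Real.dist_eq]
    calc |(r:ℝ) - s| ≤ 1 / ((j:ℝ) + 1) := hrs
      _ < δ := hj
  have := hδ _ hrm _ hsm hd
  rw [Real.dist_eq, abs_lt] at this
  have : f r ≤ f s + 1 / ((i:ℝ) + 1) := by linarith [this.1, this.2]
  calc ENNReal.ofReal (f r) ≤ ENNReal.ofReal (f s + 1 / ((i:ℝ) + 1)) :=
        ENNReal.ofReal_le_ofReal this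
    _ ≤ _ := ENNReal.ofReal_add_le


/-! ### Necessity: a measure with positive continuous density satisfies `Cond` -/

theorem L_eq_of_density {μ : Measure ℝ} {f : ℝ → ℝ} (hf : Continuous f)
    (hμ : ∀ B : Set ℝ, MeasurableSet B → μ B = ∫⁻ x in B, ENNReal.ofReal (f x)) (r : ℚ) :
    L r μ = ENNReal.ofReal (f r) := by
  have ht := avg_tendsto f hf (r : ℝ)
  have hA : (fun n => A r n μ) = fun n : ℕ =>
      (n + 1 : ℝ≥0∞) * ∫⁻ t in Set.Ico (r:ℝ) ((r:ℝ) + 1 / (n + 1)), ENNReal.ofReal (f t) := by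
    funext n
    rw [A, hμ _ measurableSet_Ico]
  rw [L, hA]
  exact ht.limsup_eq

theorem cond_of_density {μ : Measure ℝ} {f : ℝ → ℝ} (hf : Continuous f)
    (hpos : ∀ x, 0 < f x)
    (hμ : ∀ B : Set ℝ, MeasurableSet B → μ B = ∫⁻ x in B, ENNReal.ofReal (f x)) :
    Cond μ := by
  have hLr : ∀ r : ℚ, L r μ = ENNReal.ofReal (f r) := L_eq_of_density hf hμ
  refine ⟨fun r => by rw [hLr]; exact ENNReal.ofReal_ne_top, ?_, ?_, ?_⟩
  · intro N i
    obtain ⟨j, hj⟩ := osc_of_continuous f hf N i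
    exact ⟨j, fun r s h1 h2 h3 => by simpa only [hLr] using hj r s h1 h2 h3⟩
  · intro N
    have hne : (Set.Icc (-(N:ℝ)) N).Nonempty := ⟨0, by simp⟩
    obtain ⟨x0, hx0mem, hx0⟩ := isCompact_Icc.exists_isMinOn hne hf.continuousOn
    obtain ⟨k, hk⟩ := exists_nat_one_div_lt (hpos x0)
    refine ⟨k, fun r hr => ?_⟩
    rw [hLr]
    refine ENNReal.ofReal_le_ofReal (le_trans hk.le ?_)
    refine isMinOn_iff.mp hx0 (r:ℝ) ?_
    rw [Set.mem_Icc]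
    exact ⟨by linarith [(abs_le.mp hr).1], (abs_le.mp hr).2⟩
  · intro p q hpq
    rw [hμ _ measurableSet_Ico]
    have hIcc : ∀ t ∈ Set.Ico (p:ℝ) q, t ∈ Set.Icc (p:ℝ) q := fun t ht =>
      ⟨ht.1, ht.2.le⟩
    constructor
    · have := lintegral_Ico_lower f hf
        (m := ⨅ r : {r : ℚ // p ≤ r ∧ r ≤ q}, ENNReal.ofReal (f r))
        (a := (p:ℝ)) (b := (q:ℝ)) (fun t ht => iInf_rat_le f hf (hIcc t ht))
      refine le_trans (le_of_eq ?_) this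
      congr 1
      exact iInf_congr fun r => hLr r
    · have := lintegral_Ico_upper f
        (M := ⨆ r : {r : ℚ // p ≤ r ∧ r ≤ q}, ENNReal.ofReal (f r))
        (a := (p:ℝ)) (b := (q:ℝ)) (fun t ht => le_iSup_rat f hf (hIcc t ht))
      refine le_trans this (le_of_eq ?_)
      congr 1
      exact iSup_congr fun r => (hLr r).symm


/-! ### Continuous extension of a locally uniformly continuous function on ℚ -/

/-- Dyadic rational approximation. -/
def Q (k : ℕ) (x : ℝ) : ℚ := (⌊x * 2 ^ k⌋ : ℚ) / 2 ^ k

theorem Q_dist (k : ℕ) (x : ℝ) : |(Q k x : ℝ) - x| ≤ 1 / (k + 1) := by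
  have h2k : (0:ℝ) < 2 ^ k := by positivity
  have hfl := Int.floor_le (x * 2 ^ k)
  have hfl2 := Int.lt_floor_add_one (x * 2 ^ k)
  have hQ : (Q k x : ℝ) = (⌊x * 2 ^ k⌋ : ℝ) / 2 ^ k := by
    rw [Q]; push_cast; ring
  have hle : (Q k x : ℝ) ≤ x := by
    rw [hQ, div_le_iff₀ h2k]; linarith
  have hge : x - 1 / 2 ^ k ≤ (Q k x : ℝ) := by
    rw [hQ, le_div_iff₀ h2k, sub_mul, one_div, inv_mul_cancel₀ h2k.ne']; linarith
  have hk : (k:ℝ) + 1 ≤ 2 ^ k := by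
    have h := Nat.lt_two_pow_self (n := k)
    have h2 : (k:ℝ) + 1 ≤ ((2 ^ k : ℕ) : ℝ) := by exact_mod_cast Nat.succ_le_of_lt h
    simpa using h2
  have hinv : 1 / (2:ℝ) ^ k ≤ 1 / ((k:ℝ) + 1) :=
    one_div_le_one_div_of_le (by positivity) hk
  rw [abs_le]
  constructor <;> [linarith; linarith [show (0:ℝ) < 1/((k:ℝ)+1) by positivity]]

theorem Q_abs (k : ℕ) (x : ℝ) : |(Q k x : ℝ)| ≤ |x| + 1 := by
  have h := Q_dist k x
  have h1 : 1 / ((k:ℝ) + 1) ≤ 1 := by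
    rw [div_le_one (by positivity)]; linarith [Nat.cast_nonneg (α := ℝ) k]
  calc |(Q k x : ℝ)| = |((Q k x : ℝ) - x) + x| := by ring_nf
    _ ≤ |(Q k x : ℝ) - x| + |x| := abs_add_le _ _
    _ ≤ |x| + 1 := by linarith

theorem extension (ℓ : ℚ → ℝ)
    (UC : ∀ N i : ℕ, ∃ j : ℕ, ∀ r s : ℚ, |(r : ℝ)| ≤ N → |(s : ℝ)| ≤ N →
      |(r : ℝ) - s| ≤ 1 / (j + 1) → |ℓ r - ℓ s| ≤ 1 / (i + 1)) :
    ∃ f : ℝ → ℝ, Continuous f ∧ ∀ r : ℚ, f r = ℓ r := by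
  have habs : ∀ (x : ℝ) (k : ℕ), |(Q k x : ℝ)| ≤ ⌈|x|⌉₊ + 1 := by
    intro x k
    calc |(Q k x : ℝ)| ≤ |x| + 1 := Q_abs k x
      _ ≤ ⌈|x|⌉₊ + 1 := by linarith [Nat.le_ceil |x|]
  have hmono : ∀ m n : ℕ, m ≤ n → 1 / ((n:ℝ) + 1) ≤ 1 / ((m:ℝ) + 1) := by
    intro m n hmn
    apply one_div_le_one_div_of_le (by positivity)
    have : (m:ℝ) ≤ n := by exact_mod_cast hmn
    linarith
  have hcau : ∀ x : ℝ, ∃ y : ℝ, Tendsto (fun k => ℓ (Q k x)) atTop (𝓝 y) := by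
    intro x
    apply cauchySeq_tendsto_of_complete
    rw [Metric.cauchySeq_iff]
    intro ε hε
    obtain ⟨i, hi⟩ := exists_nat_one_div_lt hε
    obtain ⟨j, hj⟩ := UC (⌈|x|⌉₊ + 1) i
    refine ⟨2 * j + 2, fun m hm n hn => ?_⟩
    have hd : |(Q m x : ℝ) - (Q n x : ℝ)| ≤ 1 / ((j:ℝ) + 1) := by
      have h1 := Q_dist m x
      have h2 := Q_dist n x
      have h3 := hmono (2 * j + 2) m hm
      have h4 := hmono (2 * j + 2) n hn
      have h5 : 2 * (1 / ((2 * j + 2 : ℕ):ℝ) + 1⁻¹) ≤ 0 ∨ True := Or.inr trivial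
      have hstep : 1 / (((2 * j + 2 : ℕ):ℝ) + 1) + 1 / (((2 * j + 2 : ℕ):ℝ) + 1)
          ≤ 1 / ((j:ℝ) + 1) := by
        push_cast
        rw [← add_div, div_le_div_iff₀ (by positivity) (by positivity)]
        ring_nf
        nlinarith [Nat.cast_nonneg (α := ℝ) j]
      calc |(Q m x : ℝ) - (Q n x : ℝ)|
          = |((Q m x : ℝ) - x) - ((Q n x : ℝ) - x)| := by ring_nf
        _ ≤ |(Q m x : ℝ) - x| + |(Q n x : ℝ) - x| := abs_sub _ _
        _ ≤ 1 / (((2 * j + 2 : ℕ):ℝ) + 1) + 1 / (((2 * j + 2 : ℕ):ℝ) + 1) := by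
            push_cast at h1 h2 h3 h4 ⊢; linarith
        _ ≤ 1 / ((j:ℝ) + 1) := hstep
    have := hj (Q m x) (Q n x) (by exact_mod_cast habs x m) (by exact_mod_cast habs x n) hd
    rw [Real.dist_eq]
    exact lt_of_le_of_lt this hi
  choose f hf using hcau
  have heval : ∀ r : ℚ, f r = ℓ r := by
    intro r
    refine tendsto_nhds_unique (hf (r:ℝ)) ?_
    rw [Metric.tendsto_atTop]
    intro ε hε
    obtain ⟨i, hi⟩ := exists_nat_one_div_lt hε
    obtain ⟨j, hj⟩ := UC (⌈|(r:ℝ)|⌉₊ + 1) i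
    refine ⟨j, fun k hk => ?_⟩
    have hrabs : |(r:ℝ)| ≤ ((⌈|(r:ℝ)|⌉₊ + 1 : ℕ):ℝ) := by
      push_cast; linarith [Nat.le_ceil |(r:ℝ)|]
    have hd : |((Q k (r:ℝ) : ℚ):ℝ) - (r:ℝ)| ≤ 1 / ((j:ℝ) + 1) :=
      le_trans (Q_dist k (r:ℝ)) (hmono j k hk)
    have := hj (Q k (r:ℝ)) r (by exact_mod_cast habs (r:ℝ) k) (by exact_mod_cast hrabs) hd
    rw [Real.dist_eq]
    exact lt_of_le_of_lt this hi
  refine ⟨f, ?_, heval⟩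
  rw [Metric.continuous_iff]
  intro x ε hε
  obtain ⟨i, hi⟩ := exists_nat_one_div_lt hε
  obtain ⟨j, hj⟩ := UC (⌈|x|⌉₊ + 2) i
  refine ⟨min 1 (1 / (2 * ((j:ℝ) + 1))), lt_min one_pos (by positivity), fun y hy => ?_⟩
  rw [Real.dist_eq] at hy
  have hy1 : |y - x| ≤ 1 := le_of_lt (lt_of_lt_of_le hy (min_le_left _ _))
  have hy2 : |y - x| ≤ 1 / (2 * ((j:ℝ) + 1)) :=
    le_of_lt (lt_of_lt_of_le hy (min_le_right _ _))
  have hyabs : ∀ k, |((Q k y : ℚ):ℝ)| ≤ ((⌈|x|⌉₊ + 2 : ℕ):ℝ) := by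
    intro k
    have h1 : |y| ≤ |x| + 1 := by
      have : |y| - |x| ≤ |y - x| := by
        have := abs_sub_abs_le_abs_sub y x
        linarith
      linarith
    calc |((Q k y : ℚ):ℝ)| ≤ |y| + 1 := Q_abs k y
      _ ≤ |x| + 2 := by linarith
      _ ≤ ((⌈|x|⌉₊ + 2 : ℕ):ℝ) := by push_cast; linarith [Nat.le_ceil |x|]
  have hxabs : ∀ k, |((Q k x : ℚ):ℝ)| ≤ ((⌈|x|⌉₊ + 2 : ℕ):ℝ) := by
    intro k
    calc |((Q k x : ℚ):ℝ)| ≤ |x| + 1 := Q_abs k x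
      _ ≤ ((⌈|x|⌉₊ + 2 : ℕ):ℝ) := by push_cast; linarith [Nat.le_ceil |x|]
  have hclaim : ∀ k, 4 * j + 3 ≤ k → |ℓ (Q k y) - ℓ (Q k x)| ≤ 1 / ((i:ℝ) + 1) := by
    intro k hk
    apply hj _ _ (hyabs k) (hxabs k)
    have h1 := Q_dist k y
    have h2 := Q_dist k x
    have h3 : 1 / ((k:ℝ) + 1) ≤ 1 / (4 * ((j:ℝ) + 1)) := by
      apply one_div_le_one_div_of_le (by positivity)
      have : ((4 * j + 3 : ℕ):ℝ) ≤ k := by exact_mod_cast hk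
      push_cast at this; linarith
    calc |((Q k y : ℚ):ℝ) - ((Q k x : ℚ):ℝ)|
        = |(((Q k y : ℚ):ℝ) - y) + (y - x) + (x - ((Q k x : ℚ):ℝ))| := by ring_nf
      _ ≤ |((Q k y : ℚ):ℝ) - y| + |y - x| + |x - ((Q k x : ℚ):ℝ)| := by
          have := abs_add_le (((Q k y : ℚ):ℝ) - y) (y - x)
          have := abs_add_le ((((Q k y : ℚ):ℝ) - y) + (y - x)) (x - ((Q k x : ℚ):ℝ))
          linarith [abs_add_le (((Q k y : ℚ):ℝ) - y) (y - x)]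
      _ ≤ 1 / ((k:ℝ) + 1) + 1 / (2 * ((j:ℝ) + 1)) + 1 / ((k:ℝ) + 1) := by
          rw [abs_sub_comm x ((Q k x : ℚ):ℝ)]
          linarith
      _ ≤ 1 / ((j:ℝ) + 1) := by
          have e1 : 1/(4*((j:ℝ)+1)) + 1/(4*((j:ℝ)+1)) + 1/(2*((j:ℝ)+1)) = 1/((j:ℝ)+1) := by
            have : ((j:ℝ)+1) ≠ 0 := by positivity
            field_simp
            ring
          linarith
  have htd : Tendsto (fun k => dist (ℓ (Q k y)) (ℓ (Q k x))) atTop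
      (𝓝 (dist (f y) (f x))) := (hf y).dist (hf x)
  have hled : dist (f y) (f x) ≤ 1 / ((i:ℝ) + 1) := by
    refine le_of_tendsto htd ?_
    rw [eventually_atTop]
    exact ⟨4 * j + 3, fun k hk => by rw [Real.dist_eq]; exact hclaim k hk⟩
  exact lt_of_le_of_lt hled hi


/-! ### Uniqueness of sandwiched measures -/

theorem measure_Ico_sum (m : Measure ℝ) (a : ℝ) {d : ℝ} (hd : 0 ≤ d) (k : ℕ) :
    m (Set.Ico a (a + k * d)) =
      ∑ t ∈ Finset.range k, m (Set.Ico (a + t * d) (a + (t + 1) * d)) := by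
  induction k with
  | zero => simp
  | succ k ih =>
    rw [Finset.sum_range_succ, ← ih]
    have h1 : a ≤ a + k * d := by
      have : (0:ℝ) ≤ k * d := by positivity
      linarith
    have h2 : a + k * d ≤ a + (k + 1) * d := by push_cast; nlinarith
    have hcast : ((k+1 : ℕ):ℝ) = (k:ℝ)+1 := by push_cast; ring
    rw [hcast, ← Set.Ico_union_Ico_eq_Ico h1 h2,
      measure_union (Set.Ico_disjoint_Ico_same) measurableSet_Ico]

theorem sandwich_le {Lf : ℚ → ℝ≥0∞} (hosc : Osc Lf)
    {μ ν : Measure ℝ} (h1 : Sandwich Lf μ) (h2 : Sandwich Lf ν)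
    (p q : ℚ) (hpq : p < q) : μ (Set.Ico (p:ℝ) q) ≤ ν (Set.Ico (p:ℝ) q) := by
  have hqp : (0:ℝ) < (q:ℝ) - p := by
    have : (p:ℝ) < q := by exact_mod_cast hpq
    linarith
  refine ENNReal.le_of_forall_pos_le_add fun ε hε hfin' => ?_
  have hεR : (0:ℝ) < (ε:ℝ) := hε
  obtain ⟨i, hi⟩ := exists_nat_one_div_lt (div_pos hεR hqp)
  set N : ℕ := ⌈max |(p:ℝ)| |(q:ℝ)|⌉₊ with hN
  have hrN : ∀ r : ℚ, p ≤ r → r ≤ q → |(r:ℝ)| ≤ (N:ℝ) := by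
    intro r hpr hrq
    have hmax : max |(p:ℝ)| |(q:ℝ)| ≤ (N:ℝ) := Nat.le_ceil _
    have h1 : (p:ℝ) ≤ r := by exact_mod_cast hpr
    have h2 : (r:ℝ) ≤ q := by exact_mod_cast hrq
    rw [abs_le]
    constructor
    · have := neg_abs_le (p:ℝ)
      have := le_max_left |(p:ℝ)| |(q:ℝ)|
      linarith
    · have := le_abs_self (q:ℝ)
      have := le_max_right |(p:ℝ)| |(q:ℝ)|
      linarith
  obtain ⟨j, hj⟩ := hosc N i
  obtain ⟨n, hn⟩ := exists_nat_one_div_lt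
    (div_pos (show (0:ℝ) < 1/((j:ℝ)+1) by positivity) hqp)
  set d : ℚ := (q - p) / (n + 1) with hdd
  have hd : 0 < d := div_pos (by exact_mod_cast sub_pos.mpr hpq) (by positivity)
  have hdR : (0:ℝ) < ((d:ℚ):ℝ) := by exact_mod_cast hd
  have hdr : ((d:ℚ):ℝ) = ((q:ℝ) - p) / ((n:ℝ) + 1) := by rw [hdd]; push_cast; ring
  have hdsmall : ((d:ℚ):ℝ) ≤ 1 / ((j:ℝ) + 1) := by
    rw [hdr]
    have h := mul_lt_mul_of_pos_left hn hqp
    have he : ((q:ℝ) - p) * ((1/((j:ℝ)+1)) / ((q:ℝ)-p)) = 1/((j:ℝ)+1) := by field_simp [mul_comm]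
    have he2 : ((q:ℝ) - p) * (1/((n:ℝ)+1)) = ((q:ℝ)-p)/((n:ℝ)+1) := by ring
    rw [he2, he] at h
    exact h.le
  have hnd : ((n:ℝ) + 1) * ((d:ℚ):ℝ) = (q:ℝ) - p := by
    rw [hdr]; field_simp
  have hend : (p:ℝ) + ((n + 1 : ℕ):ℝ) * ((d:ℚ):ℝ) = (q:ℝ) := by
    push_cast
    linarith [hnd]
  have hpart : ∀ m : Measure ℝ, m (Set.Ico (p:ℝ) q) =
      ∑ t ∈ Finset.range (n+1),
        m (Set.Ico ((p:ℝ) + t * ((d:ℚ):ℝ)) ((p:ℝ) + (t+1) * ((d:ℚ):ℝ))) := by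
    intro m
    have := measure_Ico_sum m (p:ℝ) hdR.le (n+1)
    rwa [hend] at this
  set c : ℝ≥0∞ := ENNReal.ofReal (((d:ℚ):ℝ) * (1/((i:ℝ)+1))) with hc
  have piece : ∀ t ∈ Finset.range (n+1),
      μ (Set.Ico ((p:ℝ) + t * ((d:ℚ):ℝ)) ((p:ℝ) + (t+1) * ((d:ℚ):ℝ))) ≤
      ν (Set.Ico ((p:ℝ) + t * ((d:ℚ):ℝ)) ((p:ℝ) + (t+1) * ((d:ℚ):ℝ))) + c := by
    intro t ht
    rw [Finset.mem_range] at ht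
    set a : ℚ := p + t * d with ha
    set b : ℚ := p + (t+1) * d with hb
    have hab : a < b := by
      rw [ha, hb]
      have : (t:ℚ) * d < (t+1) * d := by nlinarith
      linarith
    have hpa : p ≤ a := by
      rw [ha]
      have : (0:ℚ) ≤ (t:ℚ) * d := by positivity
      linarith
    have hbq : b ≤ q := by
      rw [hb]
      have htn : ((t:ℚ)+1) ≤ (n:ℚ)+1 := by exact_mod_cast Nat.succ_le_of_lt ht
      have h2 : ((t:ℚ)+1) * d ≤ ((n:ℚ)+1) * d := by nlinarith
      have h3 : ((n:ℚ)+1) * d = q - p := by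
        rw [hdd]; field_simp
      linarith
    have hae : ((a:ℚ):ℝ) = (p:ℝ) + t * ((d:ℚ):ℝ) := by rw [ha]; push_cast; ring
    have hbe : ((b:ℚ):ℝ) = (p:ℝ) + (t+1) * ((d:ℚ):ℝ) := by rw [hb]; push_cast; ring
    have hba : ((b:ℚ):ℝ) - ((a:ℚ):ℝ) = ((d:ℚ):ℝ) := by rw [hae, hbe]; ring
    rw [← hae, ← hbe]
    have hμb := (h1 a b hab).2
    have hνb := (h2 a b hab).1
    have hiq : (⨆ r : {r : ℚ // a ≤ r ∧ r ≤ b}, Lf r) ≤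
        (⨅ r : {r : ℚ // a ≤ r ∧ r ≤ b}, Lf r) + ENNReal.ofReal (1/((i:ℝ)+1)) := by
      rw [ENNReal.iInf_add]
      refine iSup_le fun r => le_iInf fun s' => ?_
      have hrb : p ≤ (r:ℚ) ∧ (r:ℚ) ≤ q := ⟨le_trans hpa r.2.1, le_trans r.2.2 hbq⟩
      have hsb : p ≤ (s':ℚ) ∧ (s':ℚ) ≤ q := ⟨le_trans hpa s'.2.1, le_trans s'.2.2 hbq⟩
      refine hj r s' (hrN r hrb.1 hrb.2) (hrN s' hsb.1 hsb.2) ?_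
      have har : ((a:ℚ):ℝ) ≤ (r:ℚ) := by exact_mod_cast r.2.1
      have hbr : ((r:ℚ):ℝ) ≤ ((b:ℚ):ℝ) := by exact_mod_cast r.2.2
      have has : ((a:ℚ):ℝ) ≤ (s':ℚ) := by exact_mod_cast s'.2.1
      have hbs : ((s':ℚ):ℝ) ≤ ((b:ℚ):ℝ) := by exact_mod_cast s'.2.2
      rw [abs_le]
      constructor <;> [linarith [hba, hdsmall]; linarith [hba, hdsmall]]
    calc μ (Set.Ico ((a:ℚ):ℝ) ((b:ℚ):ℝ))
        ≤ ENNReal.ofReal (((b:ℚ):ℝ) - a) * ⨆ r : {r : ℚ // a ≤ r ∧ r ≤ b}, Lf r := hμb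
      _ ≤ ENNReal.ofReal (((b:ℚ):ℝ) - a) *
          ((⨅ r : {r : ℚ // a ≤ r ∧ r ≤ b}, Lf r) + ENNReal.ofReal (1/((i:ℝ)+1))) :=
          mul_le_mul_right hiq _
      _ = ENNReal.ofReal (((b:ℚ):ℝ) - a) * (⨅ r : {r : ℚ // a ≤ r ∧ r ≤ b}, Lf r) +
          ENNReal.ofReal (((b:ℚ):ℝ) - a) * ENNReal.ofReal (1/((i:ℝ)+1)) := mul_add _ _ _
      _ ≤ ν (Set.Ico ((a:ℚ):ℝ) ((b:ℚ):ℝ)) + c := by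
          refine add_le_add hνb ?_
          rw [hc, hba, ← ENNReal.ofReal_mul hdR.le]
  have hsum : μ (Set.Ico (p:ℝ) q) ≤ ν (Set.Ico (p:ℝ) q) + (n+1) • c := by
    calc μ (Set.Ico (p:ℝ) q)
        = ∑ t ∈ Finset.range (n+1),
          μ (Set.Ico ((p:ℝ) + t * ((d:ℚ):ℝ)) ((p:ℝ) + (t+1) * ((d:ℚ):ℝ))) := hpart μ
      _ ≤ ∑ t ∈ Finset.range (n+1),
          (ν (Set.Ico ((p:ℝ) + t * ((d:ℚ):ℝ)) ((p:ℝ) + (t+1) * ((d:ℚ):ℝ))) + c) :=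
          Finset.sum_le_sum piece
      _ = (∑ t ∈ Finset.range (n+1),
          ν (Set.Ico ((p:ℝ) + t * ((d:ℚ):ℝ)) ((p:ℝ) + (t+1) * ((d:ℚ):ℝ)))) + (n+1) • c := by
          rw [Finset.sum_add_distrib, Finset.sum_const, Finset.card_range]
      _ = ν (Set.Ico (p:ℝ) q) + (n+1) • c := by rw [← hpart ν]
  refine le_trans hsum (add_le_add_right ?_ _)
  have hns : ((n+1 : ℕ) : ℝ≥0∞) = ENNReal.ofReal ((n:ℝ) + 1) := by
    rw [← ENNReal.ofReal_natCast (n+1)]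
    congr 1
    push_cast
    ring
  have hcalc : (n+1) • c = ENNReal.ofReal (((q:ℝ) - p) * (1/((i:ℝ)+1))) := by
    rw [hc, nsmul_eq_mul, hns, ← ENNReal.ofReal_mul (by positivity)]
    congr 1
    rw [← hnd]
    ring
  rw [hcalc]
  have hfinal : ((q:ℝ) - p) * (1/((i:ℝ)+1)) ≤ (ε:ℝ) := by
    rw [lt_div_iff₀ hqp] at hi
    nlinarith
  calc ENNReal.ofReal (((q:ℝ) - p) * (1/((i:ℝ)+1))) ≤ ENNReal.ofReal (ε:ℝ) :=
        ENNReal.ofReal_le_ofReal hfinal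
    _ = (ε : ℝ≥0∞) := ENNReal.ofReal_coe_nnreal


theorem eq_of_Ico (μ ν : Measure ℝ)
    (hfinμ : ∀ p q : ℚ, μ (Set.Ico (p:ℝ) q) ≠ ∞)
    (h : ∀ p q : ℚ, p < q → μ (Set.Ico (p:ℝ) q) = ν (Set.Ico (p:ℝ) q)) : μ = ν := by
  have hloc : IsLocallyFiniteMeasure μ := by
    constructor
    intro x
    obtain ⟨p, hp⟩ := exists_rat_lt x
    obtain ⟨q, hq⟩ := exists_rat_gt x
    exact ⟨Set.Ico (p:ℝ) q, Ico_mem_nhds hp hq, (hfinμ p q).lt_top⟩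
  refine Real.measure_ext_Ioo_rat fun p q => ?_
  rcases le_or_gt q p with hle | hlt
  · have hempty : Set.Ioo (p:ℝ) q = ∅ := Set.Ioo_eq_empty (by exact_mod_cast not_lt.mpr hle)
    rw [hempty, measure_empty, measure_empty]
  · set a : ℕ → ℚ := fun k => p + (q - p) / (k + 2) with ha
    have hqp : (0:ℚ) < q - p := sub_pos.mpr hlt
    have hpa : ∀ k, p < a k := by
      intro k
      rw [ha]
      have : (0:ℚ) < (q - p) / (k + 2) := div_pos hqp (by positivity)
      linarith
    have haq : ∀ k, a k < q := by
      intro k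
      rw [ha]
      simp only []
      have h2 : (1:ℚ) < (k:ℚ) + 2 := by
        have := Nat.cast_nonneg (α := ℚ) k
        linarith
      have : (q - p) / ((k:ℚ) + 2) < q - p := by
        rw [div_lt_iff₀ (by positivity)]
        nlinarith
      linarith
    have hmono : Monotone fun k : ℕ => Set.Ico ((a k : ℚ) : ℝ) (q : ℝ) := by
      intro k m hkm
      apply Set.Ico_subset_Ico_left
      have : a m ≤ a k := by
        rw [ha]
        simp only []
        have h1 : ((k:ℚ) + 2) ≤ ((m:ℚ) + 2) := by
          have : (k:ℚ) ≤ m := by exact_mod_cast hkm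
          linarith
        have := div_le_div_of_nonneg_left hqp.le (by positivity : (0:ℚ) < (k:ℚ) + 2) h1
        linarith
      exact_mod_cast this
    have hU : (⋃ k, Set.Ico ((a k : ℚ) : ℝ) (q : ℝ)) = Set.Ioo (p:ℝ) q := by
      ext x
      simp only [Set.mem_iUnion, Set.mem_Ico, Set.mem_Ioo]
      constructor
      · rintro ⟨k, h1, h2⟩
        have : (p:ℝ) < ((a k : ℚ) : ℝ) := by exact_mod_cast hpa k
        exact ⟨lt_of_lt_of_le this h1, h2⟩
      · rintro ⟨h1, h2⟩
        have hxp : (0:ℝ) < x - p := by linarith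
        have hqpR : (0:ℝ) < (q:ℝ) - p := by
          have : (p:ℝ) < q := by exact_mod_cast hlt
          linarith
        obtain ⟨k, hk⟩ := exists_nat_one_div_lt (div_pos hxp hqpR)
        refine ⟨k, ?_, h2⟩
        have hcast : ((a k : ℚ) : ℝ) = (p:ℝ) + ((q:ℝ) - p) / ((k:ℝ) + 2) := by
          rw [ha]; push_cast; ring
        rw [hcast]
        rw [lt_div_iff₀ hqpR] at hk
        have hmono2 : ((q:ℝ) - p) / ((k:ℝ) + 2) ≤ ((q:ℝ) - p) / ((k:ℝ) + 1) :=
          div_le_div_of_nonneg_left hqpR.le (by positivity) (by linarith)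
        have : ((q:ℝ) - p) / ((k:ℝ) + 1) = 1 / ((k:ℝ) + 1) * ((q:ℝ) - p) := by ring
        nlinarith [hmono2]
    calc μ (Set.Ioo (p:ℝ) q) = μ (⋃ k, Set.Ico ((a k : ℚ) : ℝ) (q : ℝ)) := by rw [hU]
      _ = ⨆ k, μ (Set.Ico ((a k : ℚ) : ℝ) (q : ℝ)) :=
          Directed.measure_iUnion (hmono.directed_le)
      _ = ⨆ k, ν (Set.Ico ((a k : ℚ) : ℝ) (q : ℝ)) :=
          iSup_congr fun k => h (a k) q (haq k)
      _ = ν (⋃ k, Set.Ico ((a k : ℚ) : ℝ) (q : ℝ)) :=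
          (Directed.measure_iUnion (hmono.directed_le)).symm
      _ = ν (Set.Ioo (p:ℝ) q) := by rw [hU]


/-! ### Sufficiency: `Cond` implies existence of a positive continuous density -/

theorem density_of_cond {μ : Measure ℝ} (hC : Cond μ) :
    ∃ f : ℝ → ℝ, Continuous f ∧ (∀ x, 0 < f x) ∧
      ∀ B : Set ℝ, MeasurableSet B → μ B = ∫⁻ x in B, ENNReal.ofReal (f x) := by
  obtain ⟨hfin, hosc, hlow, hsand⟩ := hC
  set ℓ : ℚ → ℝ := fun r => (L r μ).toReal with hℓ
  have hUC : ∀ N i : ℕ, ∃ j : ℕ, ∀ r s : ℚ, |(r : ℝ)| ≤ N → |(s : ℝ)| ≤ N →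
      |(r : ℝ) - s| ≤ 1 / (j + 1) → |ℓ r - ℓ s| ≤ 1 / (i + 1) := by
    intro N i
    obtain ⟨j, hj⟩ := hosc N i
    refine ⟨j, fun r s hr hs hrs => ?_⟩
    have h1 := hj r s hr hs hrs
    have h2 := hj s r hs hr (by rwa [abs_sub_comm])
    have key : ∀ r' s' : ℚ, L r' μ ≤ L s' μ + ENNReal.ofReal (1 / ((i:ℝ) + 1)) →
        ℓ r' ≤ ℓ s' + 1 / ((i:ℝ) + 1) := by
      intro r' s' hle
      have ht : L s' μ + ENNReal.ofReal (1 / ((i:ℝ) + 1)) ≠ ∞ :=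
        ENNReal.add_ne_top.mpr ⟨hfin s', ENNReal.ofReal_ne_top⟩
      have := ENNReal.toReal_mono ht hle
      rwa [ENNReal.toReal_add (hfin s') ENNReal.ofReal_ne_top,
        ENNReal.toReal_ofReal (by positivity)] at this
    have k1 := key r s h1
    have k2 := key s r h2
    rw [abs_sub_le_iff]
    constructor <;> linarith
  obtain ⟨f, hfc, hfr⟩ := extension ℓ hUC
  have hLf : ∀ r : ℚ, ENNReal.ofReal (f r) = L r μ := fun r => by
    rw [hfr r, hℓ]
    exact ENNReal.ofReal_toReal (hfin r)
  -- positivity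
  have hfpos : ∀ x : ℝ, 0 < f x := by
    intro x
    obtain ⟨k, hk⟩ := hlow (⌈|x|⌉₊ + 1)
    obtain ⟨u, hu, hut⟩ := exists_rat_seq x
    have hub : ∀ m : ℕ, |(u m : ℝ)| ≤ ((⌈|x|⌉₊ + 1 : ℕ) : ℝ) := by
      intro m
      have h1 := (hu m).1
      have h2 := (hu m).2
      have h3 : (0:ℝ) < 1 / ((m:ℝ) + 1) := by positivity
      have h4 : 1 / ((m:ℝ) + 1) ≤ 1 := by
        rw [div_le_one (by positivity)]
        linarith [Nat.cast_nonneg (α := ℝ) m]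
      rw [abs_le]
      have h5 := neg_abs_le x
      have h6 := le_abs_self x
      have h7 := Nat.le_ceil |x|
      push_cast
      constructor <;> linarith
    have hlb : ∀ m : ℕ, 1 / ((k:ℝ) + 1) ≤ f (u m) := by
      intro m
      have := hk (u m) (by exact_mod_cast hub m)
      rw [← hLf] at this
      rcases ENNReal.ofReal_le_ofReal_iff'.mp this with h | h
      · exact h
      · exfalso
        have : (0:ℝ) < 1 / ((k:ℝ) + 1) := by positivity
        linarith
    have htf : Tendsto (fun m => f (u m)) atTop (𝓝 (f x)) := (hfc.tendsto x).comp hut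
    have : 1 / ((k:ℝ) + 1) ≤ f x := ge_of_tendsto' htf hlb
    have hkpos : (0:ℝ) < 1 / ((k:ℝ) + 1) := by positivity
    linarith
  -- the density measure
  set ν : Measure ℝ := volume.withDensity (fun x => ENNReal.ofReal (f x)) with hν
  have hνap : ∀ B : Set ℝ, MeasurableSet B → ν B = ∫⁻ x in B, ENNReal.ofReal (f x) :=
    fun B hB => withDensity_apply _ hB
  have hsandν : Sandwich (fun r => L r μ) ν := by
    intro p q hpq
    rw [hνap _ measurableSet_Ico]
    have hIcc : ∀ t ∈ Set.Ico (p:ℝ) q, t ∈ Set.Icc (p:ℝ) q := fun t ht => ⟨ht.1, ht.2.le⟩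
    constructor
    · have := lintegral_Ico_lower f hfc
        (m := ⨅ r : {r : ℚ // p ≤ r ∧ r ≤ q}, ENNReal.ofReal (f r))
        (a := (p:ℝ)) (b := (q:ℝ)) (fun t ht => iInf_rat_le f hfc (hIcc t ht))
      refine le_trans (le_of_eq ?_) this
      congr 1
      exact iInf_congr fun r => (hLf r).symm
    · have := lintegral_Ico_upper f
        (M := ⨆ r : {r : ℚ // p ≤ r ∧ r ≤ q}, ENNReal.ofReal (f r))
        (a := (p:ℝ)) (b := (q:ℝ)) (fun t ht => le_iSup_rat f hfc (hIcc t ht))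
      refine le_trans this (le_of_eq ?_)
      congr 1
      exact iSup_congr fun r => hLf r
  -- finiteness of μ on rational Ico
  have hfinμ : ∀ p q : ℚ, μ (Set.Ico (p:ℝ) q) ≠ ∞ := by
    intro p q
    rcases lt_or_ge p q with hpq | hpq
    · have hub := (hsand p q hpq).2
      have hne : ((p:ℝ)) ∈ Set.Icc (p:ℝ) q := by
        exact ⟨le_refl _, by exact_mod_cast hpq.le⟩
      obtain ⟨x0, hx0mem, hx0⟩ := isCompact_Icc.exists_isMaxOn ⟨(p:ℝ), hne⟩
        hfc.continuousOn
      have hsup : (⨆ r : {r : ℚ // p ≤ r ∧ r ≤ q}, L r μ) ≤ ENNReal.ofReal (f x0) := by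
        refine iSup_le fun r => ?_
        rw [← hLf]
        refine ENNReal.ofReal_le_ofReal (isMaxOn_iff.mp hx0 (r:ℝ) ?_)
        constructor
        · exact_mod_cast r.2.1
        · exact_mod_cast r.2.2
      refine ne_top_of_le_ne_top ?_ hub
      exact ENNReal.mul_ne_top ENNReal.ofReal_ne_top
        (ne_top_of_le_ne_top ENNReal.ofReal_ne_top hsup)
    · have : Set.Ico (p:ℝ) q = ∅ := Set.Ico_eq_empty (by exact_mod_cast not_lt.mpr hpq)
      rw [this, measure_empty]
      exact ENNReal.zero_ne_top
  -- measure equality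
  have hkey : ∀ p q : ℚ, p < q → μ (Set.Ico (p:ℝ) q) = ν (Set.Ico (p:ℝ) q) := fun p q hpq =>
    le_antisymm (sandwich_le hosc hsand hsandν p q hpq)
      (sandwich_le hosc hsandν hsand p q hpq)
  have heq : μ = ν := eq_of_Ico μ ν hfinμ hkey
  exact ⟨f, hfc, hfpos, fun B hB => by rw [heq]; exact hνap B hB⟩

theorem msle {f g : Measure ℝ → ℝ≥0∞} (hf : Measurable f) (hg : Measurable g) :
    MeasurableSet {μ : Measure ℝ | f μ ≤ g μ} := measurableSet_le hf hg

theorem measurableSet_cond : MeasurableSet {μ : Measure ℝ | Cond μ} := by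
  have hL : ∀ r : ℚ, Measurable (L r) := measurable_L
  have himp : ∀ (c : Prop) (s : Set (Measure ℝ)), MeasurableSet s →
      MeasurableSet {μ | c → μ ∈ s} := by
    intro c s hs
    by_cases hc : c
    · simpa [hc] using hs
    · simp [hc]
  have h1 : MeasurableSet {μ : Measure ℝ | ∀ r : ℚ, L r μ ≠ ∞} := by
    rw [Set.setOf_forall]
    exact MeasurableSet.iInter fun r =>
      (hL r) (measurableSet_singleton ∞) |>.compl
  have h2 : MeasurableSet {μ : Measure ℝ | Osc (fun r => L r μ)} := by
    unfold Osc
    rw [Set.setOf_forall]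
    refine MeasurableSet.iInter fun N => ?_
    rw [Set.setOf_forall]
    refine MeasurableSet.iInter fun i => ?_
    rw [Set.setOf_exists]
    refine MeasurableSet.iUnion fun j => ?_
    rw [Set.setOf_forall]
    refine MeasurableSet.iInter fun r => ?_
    rw [Set.setOf_forall]
    refine MeasurableSet.iInter fun s => ?_
    refine himp _ _ (himp _ _ (himp _ _ ?_))
    exact msle (hL r) ((hL s).add measurable_const)
  have h3 : MeasurableSet {μ : Measure ℝ | ∀ N : ℕ, ∃ k : ℕ, ∀ r : ℚ, |(r : ℝ)| ≤ N →
      ENNReal.ofReal (1 / (k + 1)) ≤ L r μ} := by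
    rw [Set.setOf_forall]
    refine MeasurableSet.iInter fun N => ?_
    rw [Set.setOf_exists]
    refine MeasurableSet.iUnion fun k => ?_
    rw [Set.setOf_forall]
    refine MeasurableSet.iInter fun r => ?_
    exact himp _ _ (msle measurable_const (hL r))
  have h4 : MeasurableSet {μ : Measure ℝ | Sandwich (fun r => L r μ) μ} := by
    unfold Sandwich
    rw [Set.setOf_forall]
    refine MeasurableSet.iInter fun p => ?_
    rw [Set.setOf_forall]
    refine MeasurableSet.iInter fun q => ?_
    refine himp _ _ ?_
    refine MeasurableSet.inter ?_ ?_
    · exact msle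
        ((Measurable.iInf (fun r : {r : ℚ // p ≤ r ∧ r ≤ q} => hL (r : ℚ))).const_mul _)
        (Measure.measurable_coe measurableSet_Ico)
    · exact msle
        (Measure.measurable_coe measurableSet_Ico)
        ((Measurable.iSup (fun r : {r : ℚ // p ≤ r ∧ r ≤ q} => hL (r : ℚ))).const_mul _)
  have : {μ : Measure ℝ | Cond μ} =
      {μ : Measure ℝ | ∀ r : ℚ, L r μ ≠ ∞} ∩
      ({μ : Measure ℝ | Osc (fun r => L r μ)} ∩
      ({μ : Measure ℝ | ∀ N : ℕ, ∃ k : ℕ, ∀ r : ℚ, |(r : ℝ)| ≤ N →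
          ENNReal.ofReal (1 / (k + 1)) ≤ L r μ} ∩
        {μ : Measure ℝ | Sandwich (fun r => L r μ) μ})) := by
    ext μ; simp [Cond, Set.mem_setOf_eq, and_assoc]
  rw [this]
  exact h1.inter (h2.inter (h3.inter h4))

end

end DensityAux

open DensityAux in
/-- Lemma `lm:density`: in the space of Borel measures on ℝ (with the σ-algebra
generated by evaluation on Borel sets, which is the canonical measurable-space
structure on `Measure ℝ`), the set of measures admitting a strictly positive
continuous Lebesgue density is measurable. -/
theorem measures_with_positive_continuous_density_measurable :
    MeasurableSet {μ : Measure ℝ |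
      ∃ f : ℝ → ℝ, Continuous f ∧ (∀ x, 0 < f x) ∧
        ∀ B : Set ℝ, MeasurableSet B → μ B = ∫⁻ x in B, ENNReal.ofReal (f x)} := by
  have hset : {μ : Measure ℝ |
      ∃ f : ℝ → ℝ, Continuous f ∧ (∀ x, 0 < f x) ∧
        ∀ B : Set ℝ, MeasurableSet B → μ B = ∫⁻ x in B, ENNReal.ofReal (f x)} =
      {μ : Measure ℝ | DensityAux.Cond μ} := by
    ext μ
    simp only [Set.mem_setOf_eq]
    constructor
    · rintro ⟨f, hfc, hfpos, hμ⟩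
      exact DensityAux.cond_of_density hfc hfpos hμ
    · exact DensityAux.density_of_cond
  rw [hset]
  exact DensityAux.measurableSet_cond
end

section
/- Let K : ℝ × ℝ → (0,∞) be a Borel function (first argument the 'terminal' point, second the 'initial' point) that is strictly totally positive of order 2 in the following sense: for all x < y and v < w, K(y,v)/K(x,v) < K(y,w)/K(x,w). Then: (i) for all x < y, every z ∈ ℝ, and every Borel function f : ℝ → [0,∞) for which the four integrals below are finite and nonzero, ∫_{−∞}^{z} K(y,w) f(w) dw / ∫_{−∞}^{z} K(x,w) f(w) dw < K(y,z)/K(x,z) < ∫_{z}^{∞} K(y,w) f(w) dw / ∫_{z}^{∞} K(x,w) f(w) dw; and (ii) symmetrically in the initial variable: for all v < z, every x ∈ ℝ, and every Borel f : ℝ → [0,∞) for which the four integrals below are finite and nonzero, ∫_{−∞}^{x} K(u,z) f(u) du / ∫_{−∞}^{x} K(u,v) f(u) du < K(x,z)/K(x,v) < ∫_{x}^{∞} K(u,z) f(u) du / ∫_{x}^{∞} K(u,v) f(u) du. -/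
open MeasureTheory Set

private lemma ratio_lt_of_pointwise (s : Set ℝ) (hs : MeasurableSet s)
    (g h f : ℝ → ℝ) (c : ℝ)
    (hh : ∀ w ∈ s, 0 < h w)
    (hratio : ∀ w ∈ s, g w < c * h w)
    (hf : ∀ w, 0 ≤ f w)
    (hig : IntegrableOn (fun w => g w * f w) s)
    (hih : IntegrableOn (fun w => h w * f w) s)
    (hposh : 0 < ∫ w in s, h w * f w) :
    (∫ w in s, g w * f w) / (∫ w in s, h w * f w) < c := by
  rw [div_lt_iff₀ hposh]
  have hD : IntegrableOn (fun w => c * (h w * f w) - g w * f w) s :=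
    (hih.const_mul c).sub hig
  have hsupp0 : 0 < volume (Function.support (fun w => h w * f w) ∩ s) := by
    rw [← setIntegral_pos_iff_support_of_nonneg_ae _ hih]
    · exact hposh
    · filter_upwards [ae_restrict_mem hs] with w hw
      exact mul_nonneg (hh w hw).le (hf w)
  have hpos : 0 < ∫ w in s, (c * (h w * f w) - g w * f w) := by
    rw [setIntegral_pos_iff_support_of_nonneg_ae _ hD]
    · refine hsupp0.trans_le (measure_mono ?_)
      rintro w ⟨hw1, hw2⟩
      refine ⟨?_, hw2⟩
      have hfw : 0 < f w := by
        rcases (hf w).lt_or_eq with h' | h'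
        · exact h'
        · exact absurd (by simp [← h'] : h w * f w = 0) hw1
      have := hratio w hw2
      have : 0 < c * (h w * f w) - g w * f w := by nlinarith
      simp only [Function.mem_support]
      exact this.ne'
    · filter_upwards [ae_restrict_mem hs] with w hw
      have := hratio w hw
      simp only [Pi.zero_apply]
      nlinarith [hf w, hh w hw]
  rw [integral_sub (hih.const_mul c) hig, integral_const_mul, sub_pos] at hpos
  exact hpos

private lemma lt_ratio_of_pointwise (s : Set ℝ) (hs : MeasurableSet s)
    (g h f : ℝ → ℝ) (c : ℝ)
    (hg : ∀ w ∈ s, 0 < g w)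
    (hh : ∀ w ∈ s, 0 < h w)
    (hratio : ∀ w ∈ s, c * h w < g w)
    (hf : ∀ w, 0 ≤ f w)
    (hig : IntegrableOn (fun w => g w * f w) s)
    (hih : IntegrableOn (fun w => h w * f w) s)
    (hposh : 0 < ∫ w in s, h w * f w) :
    c < (∫ w in s, g w * f w) / (∫ w in s, h w * f w) := by
  rw [lt_div_iff₀ hposh]
  have hD : IntegrableOn (fun w => g w * f w - c * (h w * f w)) s :=
    hig.sub (hih.const_mul c)
  have hsupp0 : 0 < volume (Function.support (fun w => h w * f w) ∩ s) := by
    rw [← setIntegral_pos_iff_support_of_nonneg_ae _ hih]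
    · exact hposh
    · filter_upwards [ae_restrict_mem hs] with w hw
      exact mul_nonneg (hh w hw).le (hf w)
  have hpos : 0 < ∫ w in s, (g w * f w - c * (h w * f w)) := by
    rw [setIntegral_pos_iff_support_of_nonneg_ae _ hD]
    · refine hsupp0.trans_le (measure_mono ?_)
      rintro w ⟨hw1, hw2⟩
      refine ⟨?_, hw2⟩
      have hfw : 0 < f w := by
        rcases (hf w).lt_or_eq with h' | h'
        · exact h'
        · exact absurd (by simp [← h'] : h w * f w = 0) hw1
      have := hratio w hw2
      have : 0 < g w * f w - c * (h w * f w) := by nlinarith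
      simp only [Function.mem_support]
      exact this.ne'
    · filter_upwards [ae_restrict_mem hs] with w hw
      have := hratio w hw
      simp only [Pi.zero_apply]
      nlinarith [hf w, hh w hw]
  rw [integral_sub hig (hih.const_mul c), integral_const_mul, sub_pos] at hpos
  exact hpos

/-- Comparison principle (Lemma `lm:comp`) for a strictly totally positive kernel
`K(terminal, initial)`: crossing inequalities for ratios of integrals against the
kernel, in both the terminal and initial variables. -/
theorem totally_positive_kernel_comparison
    (K : ℝ → ℝ → ℝ)
    (hK_meas : Measurable (Function.uncurry K))
    (hK_pos : ∀ x y, 0 < K x y)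
    (hTP : ∀ x y v w : ℝ, x < y → v < w → K y v / K x v < K y w / K x w) :
    -- (i) comparison in the terminal variable:
    (∀ x y z : ℝ, x < y → ∀ f : ℝ → ℝ, Measurable f → (∀ w, 0 ≤ f w) →
      IntegrableOn (fun w => K y w * f w) (Set.Iio z) →
      IntegrableOn (fun w => K x w * f w) (Set.Iio z) →
      IntegrableOn (fun w => K y w * f w) (Set.Ioi z) →
      IntegrableOn (fun w => K x w * f w) (Set.Ioi z) →
      (0 < ∫ w in Set.Iio z, K y w * f w) →
      (0 < ∫ w in Set.Iio z, K x w * f w) →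
      (0 < ∫ w in Set.Ioi z, K y w * f w) →
      (0 < ∫ w in Set.Ioi z, K x w * f w) →
      (∫ w in Set.Iio z, K y w * f w) / (∫ w in Set.Iio z, K x w * f w) < K y z / K x z ∧
      K y z / K x z < (∫ w in Set.Ioi z, K y w * f w) / (∫ w in Set.Ioi z, K x w * f w)) ∧
    -- (ii) comparison in the initial variable:
    (∀ v z x : ℝ, v < z → ∀ f : ℝ → ℝ, Measurable f → (∀ u, 0 ≤ f u) →
      IntegrableOn (fun u => K u z * f u) (Set.Iio x) →
      IntegrableOn (fun u => K u v * f u) (Set.Iio x) →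
      IntegrableOn (fun u => K u z * f u) (Set.Ioi x) →
      IntegrableOn (fun u => K u v * f u) (Set.Ioi x) →
      (0 < ∫ u in Set.Iio x, K u z * f u) →
      (0 < ∫ u in Set.Iio x, K u v * f u) →
      (0 < ∫ u in Set.Ioi x, K u z * f u) →
      (0 < ∫ u in Set.Ioi x, K u v * f u) →
      (∫ u in Set.Iio x, K u z * f u) / (∫ u in Set.Iio x, K u v * f u) < K x z / K x v ∧
      K x z / K x v < (∫ u in Set.Ioi x, K u z * f u) / (∫ u in Set.Ioi x, K u v * f u)) := by
  constructor
  · intro x y z hxy f hfm hfnn hi1 hi2 hi3 hi4 hp1 hp2 hp3 hp4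
    constructor
    · refine ratio_lt_of_pointwise _ measurableSet_Iio (K y) (K x) f _
        (fun w _ => hK_pos x w) ?_ hfnn hi1 hi2 hp2
      intro w hw
      have h1 := hTP x y w z hxy hw
      have h2 := hK_pos x w
      have h3 := hK_pos x z
      rw [div_lt_div_iff₀ h2 h3] at h1
      rw [div_mul_eq_mul_div, lt_div_iff₀ h3]
      linarith
    · refine lt_ratio_of_pointwise _ measurableSet_Ioi (K y) (K x) f _
        (fun w _ => hK_pos y w) (fun w _ => hK_pos x w) ?_ hfnn hi3 hi4 hp4
      intro w hw
      have h1 := hTP x y z w hxy hw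
      have h2 := hK_pos x w
      have h3 := hK_pos x z
      rw [div_lt_div_iff₀ h3 h2] at h1
      rw [div_mul_eq_mul_div, div_lt_iff₀ h3]
      linarith
  · intro v z x hvz f hfm hfnn hi1 hi2 hi3 hi4 hp1 hp2 hp3 hp4
    constructor
    · refine ratio_lt_of_pointwise _ measurableSet_Iio (fun u => K u z) (fun u => K u v) f _
        (fun u _ => hK_pos u v) ?_ hfnn hi1 hi2 hp2
      intro u hu
      have h1 := hTP u x v z hu hvz
      have h2 := hK_pos u v
      have h3 := hK_pos x v
      rw [div_lt_div_iff₀ h2 (hK_pos u z)] at h1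
      show K u z < K x z / K x v * K u v
      rw [div_mul_eq_mul_div, lt_div_iff₀ h3]
      linarith
    · refine lt_ratio_of_pointwise _ measurableSet_Ioi (fun u => K u z) (fun u => K u v) f _
        (fun u _ => hK_pos u z) (fun u _ => hK_pos u v) ?_ hfnn hi3 hi4 hp4
      intro u hu
      have h1 := hTP x u v z hu hvz
      have h2 := hK_pos x v
      have h3 := hK_pos u v
      rw [div_lt_div_iff₀ h2 (hK_pos x z)] at h1
      show K x z / K x v * K u v < K u z
      rw [div_mul_eq_mul_div, div_lt_iff₀ h2]
      linarith
end
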